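/- arXiv:0812.4667 — 3 statements merged into one kernel-verified Lean document; each statement's English description precedes it below -/
import Mathlib

section
/- Let c : Fin n → Fin n → Fin n → ℝ be the structure constants of an n-dimensional real Lie algebra. Let Û : ℝ → Matrix (Fin n) (Fin n) ℝ be continuous on (0,1] such that each Û ε is an automorphism matrix of c (i.e., Û ε is invertible and the transformed structure constants of c under Û ε equal c), let A be a constant invertible matrix, let W ε = diagonal matrix with entries f_1(ε), …, f_n(ε) where each f_i is continuous and nonvanishing on (0,1], and let Ǔ : ℝ → Matrix (Fin n) (Fin n) ℝ be continuous on (0,1], invertible for every ε ∈ (0,1], and tending entrywise as ε → 0⁺ to an invertible matrix P. Suppose the transformed structure constants of c under U ε := (Û ε) * A * (W ε) * (Ǔ ε) tend componentwise to c₀ as ε → 0⁺. Then there exist γ : Fin n → ℝ with γ i ≠ 0 for all i and β : Fin n → ℤ such that the transformed structure constants of c under the matrix ε ↦ A * diagonal(fun i => γ i * ε ^ (β i)) * P tend componentwise to c₀ as ε → 0⁺. -/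
open Filter Topology

noncomputable def transformedSC {n : ℕ} (U : Matrix (Fin n) (Fin n) ℝ)
    (c : Fin n → Fin n → Fin n → ℝ) : Fin n → Fin n → Fin n → ℝ :=
  fun i' j' k' => ∑ i, ∑ j, ∑ k, U i i' * U j j' * U⁻¹ k' k * c i j k

lemma tSC_one {n : ℕ} (c : Fin n → Fin n → Fin n → ℝ) : transformedSC 1 c = c := by
  funext i j k
  simp [transformedSC, Matrix.one_apply]

lemma sum6_comm {α M : Type*} [Fintype α] [AddCommMonoid M] (g : α → α → α → α → α → α → M) :
    ∑ a, ∑ b, ∑ d, ∑ i, ∑ j, ∑ k, g a b d i j k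
      = ∑ i, ∑ j, ∑ k, ∑ a, ∑ b, ∑ d, g a b d i j k := by
  have h1 : ∑ a, ∑ b, ∑ d, ∑ i, ∑ j, ∑ k, g a b d i j k
      = ∑ p : α × α × α, ∑ q : α × α × α, g p.1 p.2.1 p.2.2 q.1 q.2.1 q.2.2 := by
    rw [Fintype.sum_prod_type]
    refine Finset.sum_congr rfl fun a _ => ?_
    rw [Fintype.sum_prod_type]
    refine Finset.sum_congr rfl fun b _ => ?_
    refine Finset.sum_congr rfl fun d _ => ?_
    rw [Fintype.sum_prod_type]
    refine Finset.sum_congr rfl fun i _ => ?_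
    rw [Fintype.sum_prod_type]
  have h2 : ∑ i, ∑ j, ∑ k, ∑ a, ∑ b, ∑ d, g a b d i j k
      = ∑ q : α × α × α, ∑ p : α × α × α, g p.1 p.2.1 p.2.2 q.1 q.2.1 q.2.2 := by
    rw [Fintype.sum_prod_type]
    refine Finset.sum_congr rfl fun i _ => ?_
    rw [Fintype.sum_prod_type]
    refine Finset.sum_congr rfl fun j _ => ?_
    refine Finset.sum_congr rfl fun k _ => ?_
    rw [Fintype.sum_prod_type]
    refine Finset.sum_congr rfl fun a _ => ?_
    rw [Fintype.sum_prod_type]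
  rw [h1, h2, Finset.sum_comm]


lemma nested3_eq_prod {α M : Type*} [Fintype α] [AddCommMonoid M] (h : α → α → α → M) :
    ∑ a, ∑ b, ∑ d, h a b d = ∑ p : α × α × α, h p.1 p.2.1 p.2.2 := by
  rw [Fintype.sum_prod_type]
  refine Finset.sum_congr rfl fun a _ => ?_
  rw [Fintype.sum_prod_type]

lemma sum3_swap13 {α M : Type*} [Fintype α] [AddCommMonoid M] (h : α → α → α → M) :
    ∑ a, ∑ b, ∑ d, h a b d = ∑ a, ∑ b, ∑ d, h d b a := by
  rw [nested3_eq_prod, nested3_eq_prod]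
  exact Fintype.sum_equiv ⟨fun p => (p.2.2, p.2.1, p.1), fun p => (p.2.2, p.2.1, p.1),
    by rintro ⟨a,b,d⟩; rfl, by rintro ⟨a,b,d⟩; rfl⟩ _ _ (by rintro ⟨a,b,d⟩; rfl)

lemma tSC_mul {n : ℕ} (U V : Matrix (Fin n) (Fin n) ℝ) (c : Fin n → Fin n → Fin n → ℝ) :
    transformedSC (U * V) c = transformedSC V (transformedSC U c) := by
  funext i' j' k'
  set g : Fin n → Fin n → Fin n → Fin n → Fin n → Fin n → ℝ := fun a b d i j k =>
    U i d * V d i' * (U j b * V b j' * (V⁻¹ k' a * U⁻¹ a k * c i j k)) with hg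
  have L : transformedSC (U * V) c i' j' k' = ∑ i, ∑ j, ∑ k, ∑ a, ∑ b, ∑ d, g a b d i j k := by
    simp only [transformedSC, Matrix.mul_inv_rev, Matrix.mul_apply, Finset.sum_mul,
      Finset.mul_sum, hg]
    refine Finset.sum_congr rfl fun i _ => Finset.sum_congr rfl fun j _ =>
      Finset.sum_congr rfl fun k _ => Finset.sum_congr rfl fun a _ =>
      Finset.sum_congr rfl fun b _ => Finset.sum_congr rfl fun d _ => by ring
  have R : transformedSC V (transformedSC U c) i' j' k'
      = ∑ a, ∑ b, ∑ d, ∑ i, ∑ j, ∑ k, g d b a i j k := by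
    simp only [transformedSC, Finset.sum_mul, Finset.mul_sum, hg]
    refine Finset.sum_congr rfl fun a _ => Finset.sum_congr rfl fun b _ =>
      Finset.sum_congr rfl fun d _ => Finset.sum_congr rfl fun i _ =>
      Finset.sum_congr rfl fun j _ => Finset.sum_congr rfl fun k _ => by ring
  rw [L, R, sum6_comm (g := fun a b d i j k => g d b a i j k)]
  refine Finset.sum_congr rfl fun i _ => Finset.sum_congr rfl fun j _ =>
    Finset.sum_congr rfl fun k _ => ?_
  exact (sum3_swap13 (h := fun a b d => g d b a i j k)).symm ▸ rfl

lemma tSC_inv_cancel {n : ℕ} {U : Matrix (Fin n) (Fin n) ℝ} (hU : IsUnit U)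
    (c : Fin n → Fin n → Fin n → ℝ) : transformedSC U⁻¹ (transformedSC U c) = c := by
  rw [← tSC_mul, Matrix.mul_nonsing_inv U ((Matrix.isUnit_iff_isUnit_det U).1 hU), tSC_one]

lemma tSC_diagonal {n : ℕ} (d : Fin n → ℝ) (hd : ∀ i, d i ≠ 0)
    (c : Fin n → Fin n → Fin n → ℝ) (i j k : Fin n) :
    transformedSC (Matrix.diagonal d) c i j k = d i * d j * (d k)⁻¹ * c i j k := by
  classical
  have hu : IsUnit d :=
    ⟨⟨d, fun i => (d i)⁻¹, funext fun i => mul_inv_cancel₀ (hd i),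
      funext fun i => inv_mul_cancel₀ (hd i)⟩, rfl⟩
  simp [transformedSC, Matrix.inv_diagonal, Matrix.diagonal_apply, Ring.inverse, hu,
    Finset.sum_ite_eq, Finset.sum_ite_eq', ite_mul, mul_ite, mul_zero, zero_mul,
    Finset.mul_sum, Finset.sum_mul]

lemma tSC_tendsto {n : ℕ} {l : Filter ℝ} (U : ℝ → Matrix (Fin n) (Fin n) ℝ)
    (U₀ : Matrix (Fin n) (Fin n) ℝ)
    (hU : ∀ i j, Tendsto (fun ε => U ε i j) l (𝓝 (U₀ i j))) (hU₀ : IsUnit U₀)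
    (cf : ℝ → Fin n → Fin n → Fin n → ℝ) (c₀ : Fin n → Fin n → Fin n → ℝ)
    (hc : ∀ i j k, Tendsto (fun ε => cf ε i j k) l (𝓝 (c₀ i j k))) :
    ∀ i' j' k', Tendsto (fun ε => transformedSC (U ε) (cf ε) i' j' k') l
      (𝓝 (transformedSC U₀ c₀ i' j' k')) := by
  have hUP : Tendsto U l (𝓝 U₀) := by
    exact tendsto_pi_nhds.2 fun i => tendsto_pi_nhds.2 fun j => hU i j
  have hdet : (U₀).det ≠ 0 := by
    intro h
    exact (by simpa [h] using (Matrix.isUnit_iff_isUnit_det U₀).1 hU₀ : IsUnit (0:ℝ)).ne_zero rfl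
  have hinvcont : ContinuousAt Inv.inv U₀ := by
    apply continuousAt_matrix_inv
    rw [show (Ring.inverse : ℝ → ℝ) = Inv.inv from funext fun x => Ring.inverse_eq_inv x]
    exact continuousAt_inv₀ hdet
  have hinv : ∀ i j, Tendsto (fun ε => (U ε)⁻¹ i j) l (𝓝 (U₀⁻¹ i j)) := by
    intro i j
    have := (hinvcont.tendsto).comp hUP
    have h2 := tendsto_pi_nhds.1 this i
    exact tendsto_pi_nhds.1 h2 j
  intro i' j' k'
  unfold transformedSC
  refine tendsto_finset_sum _ fun i _ => tendsto_finset_sum _ fun j _ =>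
    tendsto_finset_sum _ fun k _ => ?_
  exact (((hU i i').mul (hU j j')).mul (hinv k' k)).mul (hc i j k)
section farkas
variable {ι V : Type*} [Fintype ι] [Fintype V] [DecidableEq V]

lemma cluster_aux (φ : V → ((ι → ℝ) →ₗ[ℝ] ℝ)) (x : ℕ → ι → ℝ) (S₀ Sp : Finset V) (C : V → ℝ)
    (hC : ∀ t ∈ S₀, ∀ m, |φ t (x m)| ≤ C t)
    (hp : ∀ t ∈ Sp, Tendsto (fun m => φ t (x m)) atTop atBot)
    (hne : Sp.Nonempty) :
    ∃ b : ι → ℝ, (∀ t ∈ S₀, φ t b = 0) ∧ (∀ t ∈ Sp, φ t b ≤ 0) ∧ ∃ t ∈ Sp, φ t b < 0 := by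
  classical
  set ψ : V → ((ι → ℝ) →ₗ[ℝ] ℝ) := fun t => if t ∈ S₀ ∪ Sp then φ t else 0 with hψ
  set M : ℕ → ℝ := fun m => 1 + ∑ t ∈ Sp, |φ t (x m)| with hM
  have hM1 : ∀ m, 1 ≤ M m := fun m => le_add_of_nonneg_right
    (Finset.sum_nonneg fun t _ => abs_nonneg _)
  have hMpos : ∀ m, 0 < M m := fun m => lt_of_lt_of_le one_pos (hM1 m)
  obtain ⟨t₀, ht₀⟩ := hne
  have hMtop : Tendsto M atTop atTop := by
    have h1 : Tendsto (fun m => 1 + |φ t₀ (x m)|) atTop atTop := by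
      apply tendsto_atTop_add_const_left
      have : Tendsto (fun m => φ t₀ (x m)) atTop atBot := hp t₀ ht₀
      have habs : Tendsto (fun m => |φ t₀ (x m)|) atTop atTop :=
        tendsto_abs_atBot_atTop.comp this
      exact habs
    refine tendsto_atTop_mono (fun m => ?_) h1
    have : |φ t₀ (x m)| ≤ ∑ t ∈ Sp, |φ t (x m)| :=
      Finset.single_le_sum (f := fun t => |φ t (x m)|) (fun t _ => abs_nonneg _) ht₀
    simp only [hM]; linarith
  have hMinv : Tendsto (fun m => (M m)⁻¹) atTop (𝓝 0) := hMtop.inv_tendsto_atTop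
  set T : (ι → ℝ) →ₗ[ℝ] (V → ℝ) := LinearMap.pi ψ with hT
  set u : ℕ → V → ℝ := fun m => T ((M m)⁻¹ • x m) with hu
  have huval : ∀ m t, u m t = (M m)⁻¹ * ψ t (x m) := by
    intro m t; simp [hu, hT, LinearMap.pi_apply]
  set Cb : V → ℝ := fun t => if t ∈ S₀ then C t else 1 with hCb
  have hmem : ∀ m, u m ∈ Set.univ.pi (fun t => Set.Icc (-(Cb t)) (Cb t)) := by
    intro m
    rw [Set.mem_univ_pi]
    intro t
    rw [Set.mem_Icc, ← abs_le, huval]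
    by_cases ht0 : t ∈ S₀
    · have h1 : |(M m)⁻¹ * ψ t (x m)| = (M m)⁻¹ * |φ t (x m)| := by
        rw [hψ]; simp only [if_pos (Finset.mem_union_left _ ht0)]
        rw [abs_mul, abs_of_nonneg (inv_nonneg.2 (hMpos m).le)]
      rw [h1]; simp only [hCb, if_pos ht0]
      calc (M m)⁻¹ * |φ t (x m)| ≤ 1 * |φ t (x m)| := by
            apply mul_le_mul_of_nonneg_right _ (abs_nonneg _)
            rw [inv_le_one_iff₀]; right; exact hM1 m
        _ ≤ C t := by rw [one_mul]; exact hC t ht0 m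
    · simp only [hCb, if_neg ht0]
      by_cases ht1 : t ∈ Sp
      · have h1 : |(M m)⁻¹ * ψ t (x m)| = (M m)⁻¹ * |φ t (x m)| := by
          rw [hψ]; simp only [if_pos (Finset.mem_union_right _ ht1)]
          rw [abs_mul, abs_of_nonneg (inv_nonneg.2 (hMpos m).le)]
        rw [h1]
        rw [inv_mul_le_iff₀ (hMpos m), mul_one]
        calc |φ t (x m)| ≤ ∑ t' ∈ Sp, |φ t' (x m)| :=
              Finset.single_le_sum (f := fun t' => |φ t' (x m)|) (fun t' _ => abs_nonneg _) ht1
          _ ≤ M m := by simp only [hM]; linarith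
      · have : ψ t = 0 := by rw [hψ]; simp [Finset.mem_union, ht0, ht1]
        rw [this]; simp
  have hK : IsCompact (Set.univ.pi (fun t : V => Set.Icc (-(Cb t)) (Cb t))) :=
    isCompact_univ_pi (fun t => isCompact_Icc)
  obtain ⟨y, hyK, κ, hκ, hκlim⟩ := hK.tendsto_subseq hmem
  have hrange : IsClosed ((LinearMap.range T : Submodule ℝ (V → ℝ)) : Set (V → ℝ)) :=
    Submodule.closed_of_finiteDimensional _
  have hyR : y ∈ LinearMap.range T := by
    refine hrange.mem_of_tendsto hκlim (Eventually.of_forall fun m => ?_)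
    exact ⟨(M (κ m))⁻¹ • x (κ m), rfl⟩
  obtain ⟨b, hb⟩ := hyR
  have hbt : ∀ t, ψ t b = y t := fun t => congrFun hb t
  have hcoord : ∀ t, Tendsto (fun m => u (κ m) t) atTop (𝓝 (y t)) := by
    intro t
    exact (tendsto_pi_nhds.1 hκlim) t
  -- coordinates in S₀ tend to 0
  have hy0 : ∀ t ∈ S₀, y t = 0 := by
    intro t ht0
    refine tendsto_nhds_unique (hcoord t) ?_
    have hb1 : ∀ m, ‖u m t‖ ≤ C t * (M m)⁻¹ := by
      intro m
      rw [huval, hψ]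
      simp only [if_pos (Finset.mem_union_left _ ht0)]
      rw [Real.norm_eq_abs, abs_mul, abs_of_nonneg (inv_nonneg.2 (hMpos m).le), mul_comm]
      exact mul_le_mul_of_nonneg_right (hC t ht0 m) (inv_nonneg.2 (hMpos m).le)
    have h0 : Tendsto (fun m => u m t) atTop (𝓝 0) := by
      refine squeeze_zero_norm hb1 ?_
      simpa using hMinv.const_mul (C t)
    exact h0.comp (hκ.tendsto_atTop)
  have hyneg : ∀ t ∈ Sp, y t ≤ 0 := by
    intro t ht1
    refine le_of_tendsto (hcoord t) ?_
    have hev : ∀ᶠ m in atTop, φ t (x m) ≤ 0 := (hp t ht1).eventually (eventually_le_atBot 0)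
    have hev2 : ∀ᶠ m in atTop, u m t ≤ 0 := by
      filter_upwards [hev] with m hm
      rw [huval]; simp only [hψ, if_pos (Finset.mem_union_right _ ht1)]
      exact mul_nonpos_of_nonneg_of_nonpos (inv_nonneg.2 (hMpos m).le) hm
    exact (hκ.tendsto_atTop).eventually hev2
  -- the sum of |y t| over Sp equals 1
  have hsum : ∑ t ∈ Sp, |y t| = 1 := by
    have hScont : Continuous (fun p : V → ℝ => ∑ t ∈ Sp, |p t|) :=
      continuous_finset_sum _ fun t _ => (continuous_apply t).abs
    have h1 : Tendsto (fun m => ∑ t ∈ Sp, |u (κ m) t|) atTop (𝓝 (∑ t ∈ Sp, |y t|)) :=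
      (hScont.tendsto y).comp hκlim
    have h2 : ∀ m, ∑ t ∈ Sp, |u m t| = 1 - (M m)⁻¹ := by
      intro m
      have : ∀ t ∈ Sp, |u m t| = (M m)⁻¹ * |φ t (x m)| := by
        intro t ht
        rw [huval]; simp only [hψ, if_pos (Finset.mem_union_right _ ht)]
        rw [abs_mul, abs_of_nonneg (inv_nonneg.2 (hMpos m).le)]
      rw [Finset.sum_congr rfl this, ← Finset.mul_sum]
      have hMm : ∑ t ∈ Sp, |φ t (x m)| = M m - 1 := by simp [hM]
      rw [hMm, mul_sub, inv_mul_cancel₀ (hMpos m).ne', mul_one]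
    have h3 : Tendsto (fun m => ∑ t ∈ Sp, |u (κ m) t|) atTop (𝓝 1) := by
      simp only [h2]
      have : Tendsto (fun m => 1 - (M m)⁻¹) atTop (𝓝 (1 - 0)) :=
        tendsto_const_nhds.sub hMinv
      exact (by simpa using this : Tendsto (fun m => 1 - (M m)⁻¹) atTop (𝓝 1)).comp hκ.tendsto_atTop
    have := tendsto_nhds_unique h1 h3
    linarith
  have hstrict : ∃ t ∈ Sp, y t < 0 := by
    by_contra h
    push_neg at h
    have hz : ∀ t ∈ Sp, y t = 0 := fun t ht => le_antisymm (hyneg t ht) (h t ht)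
    rw [Finset.sum_congr rfl (fun t ht => by rw [hz t ht, abs_zero])] at hsum
    simp at hsum
  refine ⟨b, ?_, ?_, ?_⟩
  · intro t ht
    have := hbt t
    simp only [hψ, if_pos (Finset.mem_union_left _ ht)] at this
    rw [this]; exact hy0 t ht
  · intro t ht
    have := hbt t
    simp only [hψ, if_pos (Finset.mem_union_right _ ht)] at this
    rw [this]; exact hyneg t ht
  · obtain ⟨t, ht, hlt⟩ := hstrict
    refine ⟨t, ht, ?_⟩
    have := hbt t
    simp only [hψ, if_pos (Finset.mem_union_right _ ht)] at this
    rw [this]; exact hlt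

end farkas

lemma farkas_aux [Fintype ι] [Fintype V] (φ : V → ((ι → ℝ) →ₗ[ℝ] ℝ)) (x : ℕ → ι → ℝ) (S₀ : Finset V) (C : V → ℝ)
    (hC : ∀ t ∈ S₀, ∀ m, |φ t (x m)| ≤ C t) :
    ∀ Sp : Finset V, (∀ t ∈ Sp, Tendsto (fun m => φ t (x m)) atTop atBot) →
    ∃ b : ι → ℝ, (∀ t ∈ S₀, φ t b = 0) ∧ ∀ t ∈ Sp, φ t b < 0 := by
  classical
  intro Sp
  induction Sp using Finset.strongInduction with
  | _ s ih =>
    intro hs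
    rcases s.eq_empty_or_nonempty with rfl | hne
    · exact ⟨0, fun t _ => map_zero _, fun t ht => absurd ht (by simp)⟩
    obtain ⟨b₁, hb₀, hble, t₁, ht₁s, ht₁lt⟩ := cluster_aux φ x S₀ s C hC hs hne
    set s' := s.filter (fun t => φ t b₁ = 0) with hs'
    have hss : s' ⊂ s := Finset.filter_ssubset.2 ⟨t₁, ht₁s, ne_of_lt ht₁lt⟩
    obtain ⟨b₂, hb₂0, hb₂lt⟩ := ih s' hss (fun t ht => hs t (Finset.filter_subset _ _ ht))
    have hD : (s \ s').Nonempty := ⟨t₁, Finset.mem_sdiff.2 ⟨ht₁s, by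
      rw [hs', Finset.mem_filter]; exact fun h => absurd h.2 (ne_of_lt ht₁lt)⟩⟩
    set D := s \ s' with hDdef
    set m₁ := D.inf' hD (fun t => -(φ t b₁)) with hm₁
    have hm₁pos : 0 < m₁ := by
      rw [hm₁, Finset.lt_inf'_iff]
      intro t ht
      rw [hDdef, Finset.mem_sdiff, hs', Finset.mem_filter] at ht
      have h1 : φ t b₁ ≤ 0 := hble t ht.1
      have h2 : φ t b₁ ≠ 0 := fun h => ht.2 ⟨ht.1, h⟩
      simpa using lt_of_le_of_ne h1 h2
    set B := D.sup' hD (fun t => |φ t b₂|) with hB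
    have hB0 : 0 ≤ B := by
      obtain ⟨t, ht⟩ := hD
      exact le_trans (abs_nonneg (φ t b₂)) (by rw [hB]; exact Finset.le_sup' (fun t => |φ t b₂|) ht)
    set δ := m₁ / (2 * (B + 1)) with hδ
    have hδpos : 0 < δ := div_pos hm₁pos (by linarith)
    refine ⟨b₁ + δ • b₂, ?_, ?_⟩
    · intro t ht
      rw [map_add, map_smul, hb₀ t ht, hb₂0 t ht, smul_eq_mul, mul_zero, add_zero]
    · intro t ht
      rw [map_add, map_smul, smul_eq_mul]
      by_cases hts : t ∈ s'
      · have h1 : φ t b₁ = 0 := by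
          rw [hs', Finset.mem_filter] at hts; exact hts.2
        rw [h1, zero_add]
        exact mul_neg_of_pos_of_neg hδpos (hb₂lt t hts)
      · have htD : t ∈ D := Finset.mem_sdiff.2 ⟨ht, hts⟩
        have h1 : φ t b₁ ≤ -m₁ := by
          have := Finset.inf'_le (fun t => -(φ t b₁)) htD
          rw [← hm₁] at this; linarith
        have h2 : |φ t b₂| ≤ B := Finset.le_sup' (fun t => |φ t b₂|) htD
        have h3 : δ * φ t b₂ ≤ δ * |φ t b₂| :=
          mul_le_mul_of_nonneg_left (le_abs_self _) hδpos.le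
        have h4 : δ * |φ t b₂| ≤ δ * (B + 1) :=
          mul_le_mul_of_nonneg_left (by linarith) hδpos.le
        have h5 : δ * (B + 1) = m₁ / 2 := by
          rw [hδ]; field_simp
        linarith

noncomputable def trF {n : ℕ} (t : Fin n × Fin n × Fin n) : (Fin n → ℝ) →ₗ[ℝ] ℝ :=
  (LinearMap.proj (R := ℝ) (φ := fun _ : Fin n => ℝ) t.1) + LinearMap.proj t.2.1
    - LinearMap.proj t.2.2

noncomputable def trFQ {n : ℕ} (t : Fin n × Fin n × Fin n) : (Fin n → ℚ) →ₗ[ℚ] ℚ :=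
  (LinearMap.proj (R := ℚ) (φ := fun _ : Fin n => ℚ) t.1) + LinearMap.proj t.2.1
    - LinearMap.proj t.2.2

lemma trF_apply {n : ℕ} (t : Fin n × Fin n × Fin n) (b : Fin n → ℝ) :
    trF t b = b t.1 + b t.2.1 - b t.2.2 := by
  simp [trF]

lemma trFQ_apply {n : ℕ} (t : Fin n × Fin n × Fin n) (b : Fin n → ℚ) :
    trFQ t b = b t.1 + b t.2.1 - b t.2.2 := by
  simp [trFQ]

lemma trF_cast {n : ℕ} (t : Fin n × Fin n × Fin n) (q : Fin n → ℚ) :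
    trF t (fun i => (q i : ℝ)) = ((trFQ t q : ℚ) : ℝ) := by
  rw [trF_apply, trFQ_apply]; push_cast; ring

lemma trF_abs_le {n : ℕ} (t : Fin n × Fin n × Fin n) (v : Fin n → ℝ) {δ : ℝ}
    (hv : ∀ i, |v i| < δ) : |trF t v| < 3 * δ := by
  rw [trF_apply]
  have h1 := hv t.1; have h2 := hv t.2.1; have h3 := hv t.2.2
  rw [abs_lt] at h1 h2 h3 ⊢
  constructor <;> [linarith; linarith]

lemma dense_rat {n : ℕ} (S : Finset (Fin n × Fin n × Fin n)) :
    ∀ b : Fin n → ℝ, (∀ t ∈ S, trF t b = 0) → ∀ δ : ℝ, 0 < δ →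
    ∃ q : Fin n → ℚ, (∀ t ∈ S, trFQ t q = 0) ∧ ∀ i, |(q i : ℝ) - b i| < δ := by
  classical
  induction S using Finset.induction with
  | empty =>
    intro b _ δ hδ
    choose q hq using fun i => exists_rat_near (b i) hδ
    exact ⟨q, by simp, fun i => by rw [abs_sub_comm]; exact hq i⟩
  | @insert t₀ s ht₀s ih =>
    intro b hb δ hδ
    by_cases hall : ∀ q : Fin n → ℚ, (∀ t ∈ s, trFQ t q = 0) → trFQ t₀ q = 0
    · obtain ⟨q, hq0, hqa⟩ := ih b (fun t ht => hb t (Finset.mem_insert_of_mem ht)) δ hδ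
      refine ⟨q, fun t ht => ?_, hqa⟩
      rcases Finset.mem_insert.1 ht with rfl | ht
      exacts [hall q hq0, hq0 t ht]
    · push_neg at hall
      obtain ⟨u, hu0, hur⟩ := hall
      set r : ℚ := trFQ t₀ u with hr
      have hrR : (0:ℝ) < |(r : ℝ)| := by
        rw [abs_pos]; exact_mod_cast hur
      set Us : ℝ := ∑ i, |(u i : ℝ)| with hUs
      have hUs0 : 0 ≤ Us := Finset.sum_nonneg fun i _ => abs_nonneg _
      set E : ℝ := 1 + 3 * Us / |(r : ℝ)| with hE
      have hE1 : 1 ≤ E := by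
        rw [hE]; nlinarith [div_nonneg (by linarith : (0:ℝ) ≤ 3 * Us) hrR.le]
      have hδ' : 0 < δ / (2 * E) := div_pos hδ (by linarith)
      obtain ⟨q', hq'0, hq'a⟩ := ih b (fun t ht => hb t (Finset.mem_insert_of_mem ht)) _ hδ'
      set s₀ : ℚ := trFQ t₀ q' with hs₀
      set q : Fin n → ℚ := fun i => q' i - (s₀ / r) * u i with hq
      have hcast : ∀ t : Fin n × Fin n × Fin n, trFQ t q = trFQ t q' - (s₀ / r) * trFQ t u := by
        intro t; simp only [hq, trFQ_apply]; ring
      refine ⟨q, fun t ht => ?_, fun i => ?_⟩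
      · rcases Finset.mem_insert.1 ht with rfl | ht
        · rw [hcast, ← hs₀, ← hr, div_mul_cancel₀ _ hur, sub_self]
        · rw [hcast, hq'0 t ht, hu0 t ht, mul_zero, sub_zero]
      · -- quantitative bound
        have hEne : E ≠ 0 := by linarith
        have ht₀0 : trF t₀ b = 0 := hb t₀ (Finset.mem_insert_self _ _)
        have hs₀R : |(s₀ : ℝ)| < 3 * (δ / (2 * E)) := by
          have h1 : (s₀ : ℝ) = trF t₀ ((fun i => (q' i : ℝ)) - b) := by
            rw [map_sub, ht₀0, sub_zero, trF_cast, hs₀]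
          rw [h1]
          refine trF_abs_le t₀ _ fun i => ?_
          simpa [Pi.sub_apply] using hq'a i
        have hqi : (q i : ℝ) = (q' i : ℝ) - ((s₀:ℝ)/(r:ℝ)) * (u i : ℝ) := by
          rw [hq]; push_cast; ring
        have hui : |(u i : ℝ)| ≤ Us :=
          Finset.single_le_sum (f := fun j => |(u j : ℝ)|) (fun j _ => abs_nonneg _)
            (Finset.mem_univ i)
        have htri : |(q i : ℝ) - b i| ≤ |(q' i : ℝ) - b i| + |(s₀:ℝ)|/|(r:ℝ)| * |(u i : ℝ)| := by
          rw [hqi, sub_right_comm, sub_eq_add_neg]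
          refine (abs_add_le _ _).trans ?_
          rw [abs_neg, abs_mul, abs_div]
        have h2 : |(s₀:ℝ)|/|(r:ℝ)| * |(u i : ℝ)| ≤ (3 * (δ / (2 * E)))/|(r:ℝ)| * Us := by
          gcongr
        have h3 : δ / (2 * E) + (3 * (δ / (2 * E)))/|(r:ℝ)| * Us = (δ / (2 * E)) * E := by
          rw [hE]; field_simp
        have h4 : (δ / (2 * E)) * E = δ / 2 := by field_simp
        have h5 := hq'a i
        calc |(q i : ℝ) - b i| ≤ |(q' i : ℝ) - b i| + |(s₀:ℝ)|/|(r:ℝ)| * |(u i : ℝ)| := htri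
          _ < δ / (2 * E) + (3 * (δ / (2 * E)))/|(r:ℝ)| * Us := by
              apply add_lt_add_of_lt_of_le h5 h2
          _ = δ / 2 := by rw [h3, h4]
          _ < δ := by linarith

lemma closed_range_limit {ι V : Type*} [Fintype ι] [Fintype V] [DecidableEq V]
    (φ : V → ((ι → ℝ) →ₗ[ℝ] ℝ)) (S : Finset V) {l : Filter ℝ} [l.NeBot]
    (x : ℝ → ι → ℝ) (y : V → ℝ)
    (hy : ∀ t ∈ S, Tendsto (fun ε => φ t (x ε)) l (𝓝 (y t))) :
    ∃ a : ι → ℝ, ∀ t ∈ S, φ t a = y t := by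
  classical
  set ψ : V → ((ι → ℝ) →ₗ[ℝ] ℝ) := fun t => if t ∈ S then φ t else 0 with hψ
  set T : (ι → ℝ) →ₗ[ℝ] (V → ℝ) := LinearMap.pi ψ with hT
  set y' : V → ℝ := fun t => if t ∈ S then y t else 0 with hy'
  have hten : Tendsto (fun ε => T (x ε)) l (𝓝 y') := by
    rw [tendsto_pi_nhds]
    intro t
    by_cases ht : t ∈ S
    · have : ∀ ε, T (x ε) t = φ t (x ε) := by
        intro ε; simp [hT, LinearMap.pi_apply, hψ, if_pos ht]
      simp only [this, hy', if_pos ht]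
      exact hy t ht
    · have : ∀ ε, T (x ε) t = 0 := by
        intro ε; simp [hT, LinearMap.pi_apply, hψ, if_neg ht]
      simp only [this, hy', if_neg ht]
      exact tendsto_const_nhds
  have hclosed : IsClosed ((LinearMap.range T : Submodule ℝ (V → ℝ)) : Set (V → ℝ)) :=
    Submodule.closed_of_finiteDimensional _
  have hymem : y' ∈ LinearMap.range T :=
    hclosed.mem_of_tendsto hten (Eventually.of_forall fun ε => ⟨x ε, rfl⟩)
  obtain ⟨a, ha⟩ := hymem
  refine ⟨a, fun t ht => ?_⟩
  have := congrFun ha t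
  simp only [hT, LinearMap.pi_apply, hψ, if_pos ht, hy'] at this ⊢
  exact this

lemma exists_int_sol {n : ℕ} (S₀ Sp : Finset (Fin n × Fin n × Fin n)) (b : Fin n → ℝ)
    (h0 : ∀ t ∈ S₀, trF t b = 0) (hpb : ∀ t ∈ Sp, 0 < trF t b) :
    ∃ β : Fin n → ℤ, (∀ t ∈ S₀, β t.1 + β t.2.1 - β t.2.2 = 0) ∧
      (∀ t ∈ Sp, 0 < β t.1 + β t.2.1 - β t.2.2) := by
  classical
  -- a uniform positive lower bound on Sp
  have hexμ : ∃ μ : ℝ, 0 < μ ∧ ∀ t ∈ Sp, μ ≤ trF t b := by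
    rcases Sp.eq_empty_or_nonempty with rfl | hne
    · exact ⟨1, one_pos, by simp⟩
    · refine ⟨Sp.inf' hne (fun t => trF t b), ?_, fun t ht => Finset.inf'_le _ ht⟩
      rw [Finset.lt_inf'_iff]
      exact fun t ht => hpb t ht
  obtain ⟨μ, hμ0, hμ⟩ := hexμ
  obtain ⟨q, hq0, hqa⟩ := dense_rat S₀ b h0 (μ / 6) (by linarith)
  have hqp : ∀ t ∈ Sp, 0 < trFQ t q := by
    intro t ht
    have h1 : ((trFQ t q : ℚ) : ℝ) = trF t b + trF t ((fun i => (q i : ℝ)) - b) := by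
      rw [map_sub, ← trF_cast]; ring
    have h2 : |trF t ((fun i => (q i : ℝ)) - b)| < 3 * (μ / 6) := by
      refine trF_abs_le t _ fun i => ?_
      simpa [Pi.sub_apply] using hqa i
    have h3 : 0 < ((trFQ t q : ℚ) : ℝ) := by
      rw [h1]
      have := hμ t ht
      rw [abs_lt] at h2
      linarith
    exact_mod_cast h3
  -- clear denominators
  set D : ℚ := ∏ j, ((q j).den : ℚ) with hD
  have hD0 : 0 < D := Finset.prod_pos fun j _ => by exact_mod_cast (q j).den_pos
  set β : Fin n → ℤ := fun i => (q i).num * ∏ j ∈ Finset.univ.erase i, ((q j).den : ℤ) with hβ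
  have hkey : ∀ i, (β i : ℚ) = D * q i := by
    intro i
    have hnum : ((q i).num : ℚ) = q i * ((q i).den : ℚ) := by
      have hden0 : ((q i).den : ℚ) ≠ 0 := by
        exact_mod_cast (q i).den_pos.ne'
      have h := Rat.num_div_den (q i)
      rw [div_eq_iff hden0] at h
      exact h
    have hprod : D = ((q i).den : ℚ) * ∏ j ∈ Finset.univ.erase i, ((q j).den : ℚ) := by
      rw [hD, ← Finset.mul_prod_erase Finset.univ (fun j => ((q j).den : ℚ)) (Finset.mem_univ i)]
    rw [hβ]
    push_cast
    rw [hnum, hprod]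
    ring
  have hsum : ∀ t : Fin n × Fin n × Fin n,
      ((β t.1 + β t.2.1 - β t.2.2 : ℤ) : ℚ) = D * trFQ t q := by
    intro t
    push_cast
    rw [hkey, hkey, hkey, trFQ_apply]
    ring
  refine ⟨β, fun t ht => ?_, fun t ht => ?_⟩
  · have : ((β t.1 + β t.2.1 - β t.2.2 : ℤ) : ℚ) = 0 := by
      rw [hsum, hq0 t ht, mul_zero]
    exact_mod_cast this
  · have : (0:ℚ) < ((β t.1 + β t.2.1 - β t.2.2 : ℤ) : ℚ) := by
      rw [hsum]
      exact mul_pos hD0 (hqp t ht)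
    exact_mod_cast this
-- MAIN THEOREM PART (appended to a.lean + b.lean)

lemma inv_entries_tendsto {n : ℕ} {l : Filter ℝ} (U : ℝ → Matrix (Fin n) (Fin n) ℝ)
    (P : Matrix (Fin n) (Fin n) ℝ)
    (hU : ∀ i j, Tendsto (fun ε => U ε i j) l (𝓝 (P i j))) (hP : IsUnit P) :
    ∀ i j, Tendsto (fun ε => (U ε)⁻¹ i j) l (𝓝 (P⁻¹ i j)) := by
  have hUP : Tendsto U l (𝓝 P) := by
    exact tendsto_pi_nhds.2 fun i => tendsto_pi_nhds.2 fun j => hU i j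
  have hdet : P.det ≠ 0 := by
    intro h
    exact (by simpa [h] using (Matrix.isUnit_iff_isUnit_det P).1 hP : IsUnit (0:ℝ)).ne_zero rfl
  have hinvcont : ContinuousAt Inv.inv P := by
    apply continuousAt_matrix_inv
    rw [show (Ring.inverse : ℝ → ℝ) = Inv.inv from funext fun x => Ring.inverse_eq_inv x]
    exact continuousAt_inv₀ hdet
  intro i j
  have h1 := (hinvcont.tendsto).comp hUP
  have h2 := tendsto_pi_nhds.1 h1 i
  exact tendsto_pi_nhds.1 h2 j

lemma sign_const {f : ℝ → ℝ} (hc : ContinuousOn f (Set.Ioc 0 1))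
    (hne : ∀ ε ∈ Set.Ioc (0:ℝ) 1, f ε ≠ 0) {ε : ℝ} (hε : ε ∈ Set.Ioc (0:ℝ) 1) :
    0 < (if 0 < f 1 then (1:ℝ) else -1) * f ε := by
  have h1 : (1:ℝ) ∈ Set.Ioc (0:ℝ) 1 := by norm_num
  have hsub : Set.Icc ε 1 ⊆ Set.Ioc (0:ℝ) 1 :=
    fun y hy => ⟨lt_of_lt_of_le hε.1 hy.1, hy.2⟩
  have hcont : ContinuousOn f (Set.Icc ε 1) := hc.mono hsub
  by_cases h : 0 < f 1
  · rw [if_pos h, one_mul]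
    rcases lt_trichotomy (f ε) 0 with hlt | heq | hgt
    · exfalso
      have : (0:ℝ) ∈ Set.Icc (f ε) (f 1) := ⟨hlt.le, h.le⟩
      obtain ⟨y, hy, hfy⟩ := intermediate_value_Icc hε.2 hcont this
      exact hne y (hsub hy) hfy
    · exact absurd heq (hne ε hε)
    · exact hgt
  · rw [if_neg h]
    have hneg : f 1 < 0 := lt_of_le_of_ne (not_lt.1 h) (hne 1 h1)
    rcases lt_trichotomy (f ε) 0 with hlt | heq | hgt
    · nlinarith
    · exact absurd heq (hne ε hε)
    · exfalso
      have : (0:ℝ) ∈ Set.Icc (f 1) (f ε) := ⟨hneg.le, hgt.le⟩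
      obtain ⟨y, hy, hfy⟩ := intermediate_value_Icc' hε.2 hcont this
      exact hne y (hsub hy) hfy

/-- Any contraction whose matrix has the form `Û_ε A W_ε Ǔ_ε`, with `Û_ε`
automorphism matrices of the initial algebra, `A` constant invertible,
`W_ε` diagonal with continuous nonvanishing entries, and `Ǔ_ε` converging to an
invertible matrix `P`, is equivalent to a generalized Inönü–Wigner contraction
with an integer signature. -/
theorem extended_diagonal_contraction_equiv_genIW_integer
    (n : ℕ) (c c₀ : Fin n → Fin n → Fin n → ℝ)
    (hanti : ∀ i j k, c i j k = -(c j i k))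
    (hjac : ∀ i j k m, ∑ l, (c i j l * c l k m + c k i l * c l j m + c j k l * c l i m) = 0)
    (Uhat Ucheck : ℝ → Matrix (Fin n) (Fin n) ℝ)
    (A P : Matrix (Fin n) (Fin n) ℝ)
    (f : Fin n → ℝ → ℝ)
    (hUhatCont : ContinuousOn Uhat (Set.Ioc 0 1))
    (hUhatAut : ∀ ε ∈ Set.Ioc (0 : ℝ) 1, IsUnit (Uhat ε) ∧ transformedSC (Uhat ε) c = c)
    (hA : IsUnit A)
    (hfcont : ∀ i, ContinuousOn (f i) (Set.Ioc 0 1))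
    (hfne : ∀ i, ∀ ε ∈ Set.Ioc (0 : ℝ) 1, f i ε ≠ 0)
    (hUcheckCont : ContinuousOn Ucheck (Set.Ioc 0 1))
    (hUcheckInv : ∀ ε ∈ Set.Ioc (0 : ℝ) 1, IsUnit (Ucheck ε))
    (hUcheckLim : ∀ i j, Tendsto (fun ε : ℝ => Ucheck ε i j) (𝓝[>] (0 : ℝ)) (𝓝 (P i j)))
    (hP : IsUnit P)
    (hlim : ∀ i' j' k', Tendsto
      (fun ε : ℝ => transformedSC
        (Uhat ε * A * Matrix.diagonal (fun i => f i ε) * Ucheck ε) c i' j' k')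
      (𝓝[>] (0 : ℝ)) (𝓝 (c₀ i' j' k'))) :
    ∃ γ : Fin n → ℝ, (∀ i, γ i ≠ 0) ∧ ∃ β : Fin n → ℤ, ∀ i' j' k',
      Tendsto (fun ε : ℝ => transformedSC
          (A * Matrix.diagonal (fun i => γ i * ε ^ (β i)) * P) c i' j' k')
        (𝓝[>] (0 : ℝ)) (𝓝 (c₀ i' j' k')) := by
  classical
  have hIoc : Set.Ioc (0:ℝ) 1 ∈ 𝓝[>] (0:ℝ) := Ioc_mem_nhdsGT_of_mem ⟨le_refl 0, one_pos⟩
  have hIoi : Set.Ioi (0:ℝ) ∈ 𝓝[>] (0:ℝ) := self_mem_nhdsWithin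
  set c' : Fin n → Fin n → Fin n → ℝ := transformedSC A c with hc'def
  set c₁ : Fin n → Fin n → Fin n → ℝ := transformedSC P⁻¹ c₀ with hc₁def
  have hPdet : IsUnit P.det := (Matrix.isUnit_iff_isUnit_det P).1 hP
  have hPinv : IsUnit P⁻¹ := (Matrix.isUnit_iff_isUnit_det _).2 (Matrix.isUnit_nonsing_inv_det P hPdet)
  -- Step A: drop the automorphism factor
  have hstep1 : ∀ i' j' k', Tendsto
      (fun ε => transformedSC (A * Matrix.diagonal (fun i => f i ε) * Ucheck ε) c i' j' k')
      (𝓝[>] (0:ℝ)) (𝓝 (c₀ i' j' k')) := by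
    intro i' j' k'
    refine Tendsto.congr' ?_ (hlim i' j' k')
    filter_upwards [hIoc] with ε hε
    have h1 : Uhat ε * A * Matrix.diagonal (fun i => f i ε) * Ucheck ε
        = Uhat ε * (A * Matrix.diagonal (fun i => f i ε) * Ucheck ε) := by
      rw [Matrix.mul_assoc, Matrix.mul_assoc, Matrix.mul_assoc]
    rw [h1, tSC_mul, (hUhatAut ε hε).2]
  -- Step B: remove Ucheck
  have hUcinv := inv_entries_tendsto Ucheck P hUcheckLim hP
  have hstep2 : ∀ i j k, Tendsto
      (fun ε => transformedSC (A * Matrix.diagonal (fun r => f r ε)) c i j k)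
      (𝓝[>] (0:ℝ)) (𝓝 (c₁ i j k)) := by
    intro i j k
    have hbase := tSC_tendsto (fun ε => (Ucheck ε)⁻¹) P⁻¹ hUcinv hPinv
      (fun ε => transformedSC (A * Matrix.diagonal (fun r => f r ε) * Ucheck ε) c) c₀
      hstep1 i j k
    refine Tendsto.congr' ?_ hbase
    filter_upwards [hIoc] with ε hε
    rw [tSC_mul (A * Matrix.diagonal (fun r => f r ε)) (Ucheck ε) c,
      tSC_inv_cancel (hUcheckInv ε hε)]
  -- Step C: extract diagonal form
  have hstep3 : ∀ i j k, Tendsto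
      (fun ε => f i ε * f j ε * (f k ε)⁻¹ * c' i j k) (𝓝[>] (0:ℝ)) (𝓝 (c₁ i j k)) := by
    intro i j k
    refine Tendsto.congr' ?_ (hstep2 i j k)
    filter_upwards [hIoc] with ε hε
    rw [tSC_mul A (Matrix.diagonal (fun r => f r ε)) c,
      tSC_diagonal (fun r => f r ε) (fun r => hfne r ε hε) _ i j k]
  -- The ratio functions and their limits
  set L : Fin n × Fin n × Fin n → ℝ :=
    fun t => c₁ t.1 t.2.1 t.2.2 * (c' t.1 t.2.1 t.2.2)⁻¹ with hLdef
  set S₀ : Finset (Fin n × Fin n × Fin n) :=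
    Finset.univ.filter (fun t => c' t.1 t.2.1 t.2.2 ≠ 0 ∧ c₁ t.1 t.2.1 t.2.2 ≠ 0) with hS₀def
  set Sp : Finset (Fin n × Fin n × Fin n) :=
    Finset.univ.filter (fun t => c' t.1 t.2.1 t.2.2 ≠ 0 ∧ c₁ t.1 t.2.1 t.2.2 = 0) with hSpdef
  have hgL : ∀ t : Fin n × Fin n × Fin n, c' t.1 t.2.1 t.2.2 ≠ 0 →
      Tendsto (fun ε => f t.1 ε * f t.2.1 ε * (f t.2.2 ε)⁻¹) (𝓝[>] (0:ℝ)) (𝓝 (L t)) := by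
    intro t hc
    have h1 := (hstep3 t.1 t.2.1 t.2.2).mul_const (c' t.1 t.2.1 t.2.2)⁻¹
    exact h1.congr (fun ε => by rw [mul_assoc, mul_inv_cancel₀ hc, mul_one])
  -- constant signs
  set σ : Fin n → ℝ := fun i => if 0 < f i 1 then 1 else -1 with hσdef
  have hσpos : ∀ i, ∀ ε ∈ Set.Ioc (0:ℝ) 1, 0 < σ i * f i ε :=
    fun i ε hε => sign_const (hfcont i) (hfne i) hε
  have hσsq : ∀ i, σ i * σ i = 1 := by
    intro i; by_cases h : 0 < f i 1 <;> simp [hσdef, h]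
  have hσinv : ∀ i, (σ i)⁻¹ = σ i := by
    intro i; by_cases h : 0 < f i 1 <;> norm_num [hσdef, h]
  have hσabs : ∀ i, |σ i| = 1 := by
    intro i; by_cases h : 0 < f i 1 <;> simp [hσdef, h]
  have hσne : ∀ i, σ i ≠ 0 := by
    intro i h
    have := hσsq i; rw [h, mul_zero] at this; norm_num at this
  have hgpos : ∀ t : Fin n × Fin n × Fin n, ∀ ε ∈ Set.Ioc (0:ℝ) 1,
      0 < (σ t.1 * σ t.2.1 * σ t.2.2) * (f t.1 ε * f t.2.1 ε * (f t.2.2 ε)⁻¹) := by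
    intro t ε hε
    have h1 := hσpos t.1 ε hε
    have h2 := hσpos t.2.1 ε hε
    have h3 := hσpos t.2.2 ε hε
    have key : (σ t.1 * σ t.2.1 * σ t.2.2) * (f t.1 ε * f t.2.1 ε * (f t.2.2 ε)⁻¹)
        = (σ t.1 * f t.1 ε) * (σ t.2.1 * f t.2.1 ε) * (σ t.2.2 * f t.2.2 ε)⁻¹ := by
      rw [mul_inv, hσinv]; ring
    rw [key]
    exact mul_pos (mul_pos h1 h2) (inv_pos.2 h3)
  have hLsign : ∀ t ∈ S₀, (σ t.1 * σ t.2.1 * σ t.2.2) * |L t| = L t := by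
    intro t ht
    obtain ⟨hc', hc₁⟩ := (Finset.mem_filter.1 ht).2
    have hL0 : L t ≠ 0 := mul_ne_zero hc₁ (inv_ne_zero hc')
    set s := σ t.1 * σ t.2.1 * σ t.2.2 with hsdef
    have hsL : Tendsto (fun ε => s * (f t.1 ε * f t.2.1 ε * (f t.2.2 ε)⁻¹))
        (𝓝[>] (0:ℝ)) (𝓝 (s * L t)) := (hgL t hc').const_mul s
    have hsLnn : 0 ≤ s * L t := by
      refine ge_of_tendsto hsL ?_
      filter_upwards [hIoc] with ε hε
      exact (hgpos t ε hε).le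
    have hsne : s ≠ 0 := mul_ne_zero (mul_ne_zero (hσne _) (hσne _)) (hσne _)
    have hsLpos : 0 < s * L t := lt_of_le_of_ne hsLnn (Ne.symm (mul_ne_zero hsne hL0))
    have hss : s * s = 1 := by
      have e1 := hσsq t.1; have e2 := hσsq t.2.1; have e3 := hσsq t.2.2
      calc s * s = (σ t.1 * σ t.1) * (σ t.2.1 * σ t.2.1) * (σ t.2.2 * σ t.2.2) := by
            rw [hsdef]; ring
        _ = 1 := by rw [e1, e2, e3]; ring
    have habs : |s| = 1 := by
      rw [hsdef, abs_mul, abs_mul, hσabs, hσabs, hσabs]; ring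
    have hLabs : |L t| = s * L t := by
      have hx : |s * L t| = s * L t := abs_of_pos hsLpos
      rw [abs_mul, habs, one_mul] at hx
      exact hx
    rw [hLabs, ← mul_assoc, hss, one_mul]
  -- logs
  set x : ℝ → Fin n → ℝ := fun ε i => Real.log |f i ε| with hxdef
  have hφx : ∀ (t : Fin n × Fin n × Fin n), ∀ ε ∈ Set.Ioc (0:ℝ) 1,
      trF t (x ε) = Real.log |f t.1 ε * f t.2.1 ε * (f t.2.2 ε)⁻¹| := by
    intro t ε hε
    have h1 : f t.1 ε ≠ 0 := hfne _ ε hε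
    have h2 : f t.2.1 ε ≠ 0 := hfne _ ε hε
    have h3 : f t.2.2 ε ≠ 0 := hfne _ ε hε
    rw [trF_apply]
    rw [show |f t.1 ε * f t.2.1 ε * (f t.2.2 ε)⁻¹|
        = |f t.1 ε| * |f t.2.1 ε| * |f t.2.2 ε|⁻¹ from by rw [abs_mul, abs_mul, abs_inv]]
    rw [Real.log_mul (mul_ne_zero (abs_ne_zero.2 h1) (abs_ne_zero.2 h2))
      (inv_ne_zero (abs_ne_zero.2 h3)), Real.log_mul (abs_ne_zero.2 h1) (abs_ne_zero.2 h2),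
      Real.log_inv]
    simp only [hxdef]
    ring
  have hlog0 : ∀ t ∈ S₀, Tendsto (fun ε => trF t (x ε)) (𝓝[>] (0:ℝ))
      (𝓝 (Real.log |L t|)) := by
    intro t ht
    obtain ⟨hc', hc₁⟩ := (Finset.mem_filter.1 ht).2
    have hL0 : L t ≠ 0 := mul_ne_zero hc₁ (inv_ne_zero hc')
    have h1 : Tendsto (fun ε => |f t.1 ε * f t.2.1 ε * (f t.2.2 ε)⁻¹|)
        (𝓝[>] (0:ℝ)) (𝓝 |L t|) := (hgL t hc').abs
    have h2 := ((Real.continuousAt_log (abs_ne_zero.2 hL0)).tendsto).comp h1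
    refine Tendsto.congr' ?_ h2
    filter_upwards [hIoc] with ε hε
    exact (hφx t ε hε).symm
  have hlogp : ∀ t ∈ Sp, Tendsto (fun ε => trF t (x ε)) (𝓝[>] (0:ℝ)) atBot := by
    intro t ht
    obtain ⟨hc', hc₁⟩ := (Finset.mem_filter.1 ht).2
    have hLt : L t = 0 := by rw [hLdef]; simp only []; rw [hc₁, zero_mul]
    have h1 : Tendsto (fun ε => |f t.1 ε * f t.2.1 ε * (f t.2.2 ε)⁻¹|)
        (𝓝[>] (0:ℝ)) (𝓝[≠] (0:ℝ)) := by
      rw [tendsto_nhdsWithin_iff]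
      constructor
      · have := (hgL t hc').abs
        rw [hLt, abs_zero] at this
        exact this
      · filter_upwards [hIoc] with ε hε
        have : f t.1 ε * f t.2.1 ε * (f t.2.2 ε)⁻¹ ≠ 0 :=
          mul_ne_zero (mul_ne_zero (hfne _ ε hε) (hfne _ ε hε)) (inv_ne_zero (hfne _ ε hε))
        simpa using abs_ne_zero.2 this
    have h2 := Real.tendsto_log_nhdsNE_zero.comp h1
    refine Tendsto.congr' ?_ h2
    filter_upwards [hIoc] with ε hε
    exact (hφx t ε hε).symm
  -- multiplicative solution
  obtain ⟨a, ha⟩ := closed_range_limit trF S₀ x (fun t => Real.log |L t|) hlog0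
  set γ : Fin n → ℝ := fun i => σ i * Real.exp (a i) with hγdef
  have hγne : ∀ i, γ i ≠ 0 := fun i => mul_ne_zero (hσne i) (Real.exp_ne_zero _)
  -- integer exponents
  obtain ⟨e, he⟩ := (𝓝[>] (0:ℝ)).exists_seq_tendsto
  set xs : ℕ → Fin n → ℝ := fun m => x (e m) with hxsdef
  have hCex : ∀ t ∈ S₀, BddAbove (Set.range fun m => |trF t (xs m)|) := by
    intro t ht
    exact (((hlog0 t ht).comp he).abs).bddAbove_range
  set C : Fin n × Fin n × Fin n → ℝ := fun t => ⨆ m, |trF t (xs m)| with hCdef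
  have hC : ∀ t ∈ S₀, ∀ m, |trF t (xs m)| ≤ C t := fun t ht m => le_ciSup (hCex t ht) m
  have hpseq : ∀ t ∈ Sp, Tendsto (fun m => trF t (xs m)) atTop atBot :=
    fun t ht => (hlogp t ht).comp he
  obtain ⟨b0, hb00, hb0neg⟩ := farkas_aux trF xs S₀ C hC Sp hpseq
  obtain ⟨β, hβ0, hβp⟩ := exists_int_sol S₀ Sp (-b0)
    (fun t ht => by rw [map_neg, hb00 t ht, neg_zero])
    (fun t ht => by rw [map_neg]; linarith [hb0neg t ht])
  refine ⟨γ, hγne, β, ?_⟩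
  intro i' j' k'
  -- inner limits: transformed SC under A * diagonal tends to c₁
  have hinner : ∀ i j k, Tendsto
      (fun ε => transformedSC (A * Matrix.diagonal (fun r => γ r * ε ^ (β r))) c i j k)
      (𝓝[>] (0:ℝ)) (𝓝 (c₁ i j k)) := by
    intro i j k
    have hdne : ∀ ε ∈ Set.Ioi (0:ℝ), ∀ r, γ r * ε ^ (β r) ≠ 0 :=
      fun ε hε r => mul_ne_zero (hγne r) (zpow_ne_zero _ (ne_of_gt hε))
    have heq : ∀ᶠ ε in 𝓝[>] (0:ℝ),
        transformedSC (A * Matrix.diagonal (fun r => γ r * ε ^ (β r))) c i j k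
          = (γ i * ε ^ (β i)) * (γ j * ε ^ (β j)) * (γ k * ε ^ (β k))⁻¹ * c' i j k := by
      filter_upwards [hIoi] with ε hε
      rw [tSC_mul A (Matrix.diagonal (fun r => γ r * ε ^ (β r))) c,
        tSC_diagonal (fun r => γ r * ε ^ (β r)) (hdne ε hε) _ i j k]
    refine Tendsto.congr' (EventuallyEq.symm heq) ?_
    by_cases hcz : c' i j k = 0
    · have hcz1 : c₁ i j k = 0 := by
        refine tendsto_nhds_unique (hstep3 i j k) ?_
        exact tendsto_const_nhds.congr (fun ε => by rw [hcz, mul_zero])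
      rw [hcz1]
      exact tendsto_const_nhds.congr (fun ε => by rw [hcz, mul_zero])
    · by_cases hcz1 : c₁ i j k = 0
      · -- (i,j,k) ∈ Sp
        have htSp : (i, j, k) ∈ Sp := by
          rw [hSpdef, Finset.mem_filter]
          exact ⟨Finset.mem_univ _, hcz, hcz1⟩
        have hN : (0:ℤ) < β i + β j - β k := hβp (i, j, k) htSp
        have heq2 : ∀ᶠ ε in 𝓝[>] (0:ℝ),
            (γ i * ε ^ (β i)) * (γ j * ε ^ (β j)) * (γ k * ε ^ (β k))⁻¹ * c' i j k
              = (γ i * γ j * (γ k)⁻¹ * c' i j k) * ε ^ ((β i + β j - β k).toNat) := by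
          filter_upwards [hIoi] with ε hε
          have hεne : ε ≠ 0 := ne_of_gt hε
          have hnat : (ε:ℝ) ^ ((β i + β j - β k).toNat) = ε ^ (β i + β j - β k) := by
            rw [← zpow_natCast, Int.toNat_of_nonneg hN.le]
          have hsplit : (ε:ℝ) ^ (β i + β j - β k) = ε ^ (β i) * ε ^ (β j) * (ε ^ (β k))⁻¹ := by
            rw [zpow_sub₀ hεne, zpow_add₀ hεne, div_eq_mul_inv]
          rw [hnat, hsplit, mul_inv]
          ring
        have hpow : Tendsto
            (fun ε : ℝ => (γ i * γ j * (γ k)⁻¹ * c' i j k) * ε ^ ((β i + β j - β k).toNat))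
            (𝓝[>] (0:ℝ)) (𝓝 0) := by
          have h1 : Tendsto (fun ε : ℝ => ε ^ ((β i + β j - β k).toNat))
              (𝓝[>] (0:ℝ)) (𝓝 0) := by
            have h2 := (continuous_pow ((β i + β j - β k).toNat)).tendsto (0:ℝ)
            rw [zero_pow (by omega : (β i + β j - β k).toNat ≠ 0)] at h2
            exact h2.mono_left nhdsWithin_le_nhds
          simpa using h1.const_mul (γ i * γ j * (γ k)⁻¹ * c' i j k)
        rw [hcz1]
        exact Tendsto.congr' (EventuallyEq.symm heq2) hpow
      · -- (i,j,k) ∈ S₀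
        have htS0 : (i, j, k) ∈ S₀ := by
          rw [hS₀def, Finset.mem_filter]
          exact ⟨Finset.mem_univ _, hcz, hcz1⟩
        have hLt0 : L (i, j, k) ≠ 0 := mul_ne_zero hcz1 (inv_ne_zero hcz)
        have hval : ∀ᶠ ε in 𝓝[>] (0:ℝ),
            (γ i * ε ^ (β i)) * (γ j * ε ^ (β j)) * (γ k * ε ^ (β k))⁻¹ * c' i j k
              = c₁ i j k := by
          filter_upwards [hIoi] with ε hε
          have hεne : ε ≠ 0 := ne_of_gt hε
          have hβsum : β i + β j - β k = 0 := hβ0 (i, j, k) htS0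
          have hεpow : (ε:ℝ) ^ (β i) * ε ^ (β j) * (ε ^ (β k))⁻¹ = 1 := by
            rw [← div_eq_mul_inv, ← zpow_add₀ hεne, ← zpow_sub₀ hεne, hβsum, zpow_zero]
          have hγprod : γ i * γ j * (γ k)⁻¹ = L (i, j, k) := by
            have hexp : Real.exp (a i) * Real.exp (a j) * (Real.exp (a k))⁻¹
                = Real.exp (a i + a j - a k) := by
              rw [← Real.exp_neg, ← Real.exp_add, ← Real.exp_add]
              ring_nf
            have h1 : γ i * γ j * (γ k)⁻¹
                = (σ i * σ j * σ k) * Real.exp (a i + a j - a k) := by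
              rw [hγdef]; simp only []
              rw [mul_inv, hσinv k, ← hexp]
              ring
            have h2 : a i + a j - a k = Real.log |L (i, j, k)| := by
              have := ha (i, j, k) htS0
              rw [trF_apply] at this
              exact this
            rw [h1, h2, Real.exp_log (abs_pos.2 hLt0)]
            exact hLsign (i, j, k) htS0
          have hfinalval : L (i, j, k) * c' i j k = c₁ i j k := by
            rw [hLdef]; simp only []
            rw [mul_assoc, inv_mul_cancel₀ hcz, mul_one]
          calc (γ i * ε ^ (β i)) * (γ j * ε ^ (β j)) * (γ k * ε ^ (β k))⁻¹ * c' i j k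
              = (γ i * γ j * (γ k)⁻¹) * (ε ^ (β i) * ε ^ (β j) * (ε ^ (β k))⁻¹)
                  * c' i j k := by rw [mul_inv]; ring
            _ = c₁ i j k := by rw [hγprod, hεpow, mul_one, hfinalval]
        exact Tendsto.congr' (EventuallyEq.symm hval) tendsto_const_nhds
  -- outer composition with P
  have houter := tSC_tendsto (fun _ => P) P (fun i j => tendsto_const_nhds) hP
    (fun ε => transformedSC (A * Matrix.diagonal (fun r => γ r * ε ^ (β r))) c) c₁
    hinner i' j' k'
  have hvalP : transformedSC P c₁ = c₀ := by
    rw [hc₁def, ← tSC_mul, Matrix.nonsing_inv_mul P hPdet, tSC_one]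
  rw [hvalP] at houter
  refine houter.congr (fun ε => ?_)
  rw [tSC_mul (A * Matrix.diagonal (fun r => γ r * ε ^ (β r))) P c]
end

section
/- Let c : Fin n → Fin n → Fin n → ℝ be the structure constants of an n-dimensional real Lie algebra, let f : Fin n → ℕ → ℝ be such that f i p ≠ 0 for all i and p, and let c₀ : Fin n → Fin n → Fin n → ℝ be such that for all i, j, k the sequence p ↦ c i j k * (f i p) * (f j p) / (f k p) tends to c₀ i j k as p → ∞. Then there exist γ : Fin n → ℝ with γ i ≠ 0 for all i, and β : Fin n → ℤ, such that for all i, j, k the function ε ↦ c i j k * (γ i * γ j / γ k) * ε ^ (β i + β j - β k) (integer power, ε > 0) tends to c₀ i j k as ε → 0⁺. -/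
open Filter Topology Matrix

/-- Core linear-algebraic lemma: if a sequence `x p` of real vectors makes certain rational
linear functionals tend to `+∞` and others converge, then there is a rational vector making the
first family positive and the second family zero, and a real vector realizing the limits. -/
lemma core_lemma {n : ℕ} {ι₀ ι₁ : Type*} [Fintype ι₀] [Fintype ι₁]
    (a : ι₀ → Fin n → ℚ) (b : ι₁ → Fin n → ℚ) (x : ℕ → Fin n → ℝ) (d : ι₁ → ℝ)
    (h0 : ∀ s, Tendsto (fun p => ∑ i, (a s i : ℝ) * x p i) atTop atTop)
    (h1 : ∀ t, Tendsto (fun p => ∑ i, (b t i : ℝ) * x p i) atTop (𝓝 (d t))) :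
    (∃ β : Fin n → ℚ, (∀ t, ∑ i, b t i * β i = 0) ∧ (∀ s, 0 < ∑ i, a s i * β i)) ∧
    (∃ y : Fin n → ℝ, ∀ t, ∑ i, (b t i : ℝ) * y i = d t) := by
  classical
  set MB : Matrix ι₁ (Fin n) ℚ := Matrix.of b with hMBdef
  set B : (Fin n → ℚ) →ₗ[ℚ] (ι₁ → ℚ) := Matrix.toLin' MB with hBdef
  obtain ⟨σ, hσ⟩ := B.rangeRestrict.exists_rightInverse_of_surjective B.range_rangeRestrict
  obtain ⟨π, hπ⟩ := (LinearMap.range B).subtype.exists_leftInverse_of_injective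
    (Submodule.ker_subtype _)
  set τ : (ι₁ → ℚ) →ₗ[ℚ] (Fin n → ℚ) := σ.comp π with hτdef
  have hπ' : ∀ w : LinearMap.range B, π (w : ι₁ → ℚ) = w := by
    intro w
    have := LinearMap.ext_iff.mp hπ w
    simpa using this
  have hσ' : ∀ w : LinearMap.range B, B (σ w) = (w : ι₁ → ℚ) := by
    intro w
    have := LinearMap.ext_iff.mp hσ w
    have h2 : B.rangeRestrict (σ w) = w := by exact this
    calc B (σ w) = ((B.rangeRestrict (σ w) : LinearMap.range B) : ι₁ → ℚ) := rfl
    _ = (w : ι₁ → ℚ) := by rw [h2]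
  have key : B.comp (τ.comp B) = B := by
    apply LinearMap.ext
    intro v
    have e0 : B v = ((B.rangeRestrict v : LinearMap.range B) : ι₁ → ℚ) := rfl
    simp only [LinearMap.comp_apply, hτdef]
    rw [e0, hπ' (B.rangeRestrict v), hσ' (B.rangeRestrict v)]
  set Mτ : Matrix (Fin n) ι₁ ℚ := LinearMap.toMatrix' τ with hMτdef
  have keyM : MB * Mτ * MB = MB := by
    have h2 : LinearMap.toMatrix' (B.comp (τ.comp B)) = LinearMap.toMatrix' B :=
      congrArg _ key
    rw [LinearMap.toMatrix'_comp, LinearMap.toMatrix'_comp] at h2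
    rw [hBdef, LinearMap.toMatrix'_toLin'] at h2
    rw [← Matrix.mul_assoc] at h2
    exact h2
  -- real versions
  set φ : ℚ →+* ℝ := Rat.castHom ℝ with hφdef
  set MBr : Matrix ι₁ (Fin n) ℝ := MB.map φ with hMBrdef
  set Mτr : Matrix (Fin n) ι₁ ℝ := Mτ.map φ with hMτrdef
  have keyMr : MBr * Mτr * MBr = MBr := by
    have := congrArg (fun M : Matrix ι₁ (Fin n) ℚ => M.map (φ : ℚ → ℝ)) keyM
    simpa [Matrix.map_mul] using this
  have hMBr_apply : ∀ t i, MBr t i = (b t i : ℝ) := by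
    intro t i; simp [hMBrdef, hMBdef, Matrix.map_apply]
  have hBx : ∀ (v : Fin n → ℝ) t, (MBr *ᵥ v) t = ∑ i, (b t i : ℝ) * v i := by
    intro v t
    simp [Matrix.mulVec, dotProduct, hMBr_apply]
  have h1' : ∀ t, Tendsto (fun p => (MBr *ᵥ x p) t) atTop (𝓝 (d t)) := by
    intro t
    exact (h1 t).congr fun p => (hBx (x p) t).symm
  have hw : ∀ i, Tendsto (fun p => (Mτr *ᵥ (MBr *ᵥ x p)) i) atTop (𝓝 ((Mτr *ᵥ d) i)) := by
    intro i
    simp only [Matrix.mulVec, dotProduct]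
    exact tendsto_finset_sum _ fun t _ => (h1' t).const_mul _
  -- the y part
  have hy : ∀ t, ∑ i, (b t i : ℝ) * (Mτr *ᵥ d) i = d t := by
    intro t
    have hgoal : ∑ i, (b t i : ℝ) * (Mτr *ᵥ d) i = ((MBr * Mτr) *ᵥ d) t := by
      rw [← Matrix.mulVec_mulVec]
      exact (hBx (Mτr *ᵥ d) t).symm
    have hA : Tendsto (fun p => ((MBr * Mτr) *ᵥ (MBr *ᵥ x p)) t) atTop
        (𝓝 (((MBr * Mτr) *ᵥ d) t)) := by
      simp only [Matrix.mulVec, dotProduct]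
      exact tendsto_finset_sum _ fun u _ => (h1' u).const_mul _
    have hB2 : ∀ p, ((MBr * Mτr) *ᵥ (MBr *ᵥ x p)) t = (MBr *ᵥ x p) t := by
      intro p
      rw [Matrix.mulVec_mulVec, keyMr]
    rw [hgoal]
    exact tendsto_nhds_unique hA ((h1' t).congr fun p => (hB2 p).symm)
  -- the β part
  set k : ℕ → Fin n → ℝ := fun p => x p - Mτr *ᵥ (MBr *ᵥ x p) with hkdef
  have hker : ∀ p, MBr *ᵥ k p = 0 := by
    intro p
    rw [hkdef]
    simp only [Matrix.mulVec_sub, Matrix.mulVec_mulVec]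
    rw [← Matrix.mul_assoc, keyMr]
    exact sub_self _
  have hka : ∀ s, Tendsto (fun p => ∑ i, (a s i : ℝ) * k p i) atTop atTop := by
    intro s
    have heq : ∀ p, ∑ i, (a s i : ℝ) * k p i
        = (∑ i, (a s i : ℝ) * x p i) + (∑ i, (a s i : ℝ) * (-(Mτr *ᵥ (MBr *ᵥ x p)) i)) := by
      intro p
      rw [← Finset.sum_add_distrib]
      refine Finset.sum_congr rfl fun i _ => ?_
      simp [hkdef]
      ring
    have h2 : Tendsto (fun p => ∑ i, (a s i : ℝ) * (-(Mτr *ᵥ (MBr *ᵥ x p)) i)) atTop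
        (𝓝 (∑ i, (a s i : ℝ) * (-(Mτr *ᵥ d) i))) := by
      refine tendsto_finset_sum _ fun i _ => ?_
      exact (((hw i).neg).const_mul _)
    exact (((h0 s).atTop_add h2).congr fun p => (heq p).symm)
  have hev : ∀ᶠ p in atTop, ∀ s, 1 ≤ ∑ i, (a s i : ℝ) * k p i :=
    eventually_all.mpr fun s => (hka s).eventually_ge_atTop 1
  obtain ⟨p0, hp0⟩ := hev.exists
  set z : Fin n → ℝ := k p0 with hzdef
  set F : ι₀ → (Fin n → ℝ) → ℝ :=
    fun s v => ∑ i, (a s i : ℝ) * (v - Mτr *ᵥ (MBr *ᵥ v)) i with hFdef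
  have hFcont : ∀ s, Continuous (F s) := by
    intro s
    apply continuous_finset_sum
    intro i _
    apply Continuous.mul continuous_const
    apply Continuous.sub (continuous_apply i)
    simp only [Matrix.mulVec, dotProduct]
    apply continuous_finset_sum
    intro t _
    exact continuous_const.mul (continuous_finset_sum _ fun j _ =>
      continuous_const.mul (continuous_apply j))
  have hU : IsOpen {v : Fin n → ℝ | ∀ s, 0 < F s v} := by
    have : {v : Fin n → ℝ | ∀ s, 0 < F s v} = ⋂ s, (F s) ⁻¹' Set.Ioi 0 := by
      ext v; simp [Set.mem_iInter]
    rw [this]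
    exact isOpen_iInter_of_finite fun s => (isOpen_Ioi).preimage (hFcont s)
  have hzU : z ∈ {v : Fin n → ℝ | ∀ s, 0 < F s v} := by
    intro s
    have hz0 : MBr *ᵥ z = 0 := hker p0
    have hz1 : F s z = ∑ i, (a s i : ℝ) * z i := by
      simp only [hFdef, hz0, Matrix.mulVec_zero, sub_zero]
    have := hp0 s
    show 0 < F s z
    rw [hz1]
    linarith
  obtain ⟨δ, δpos, hball⟩ := Metric.isOpen_iff.mp hU z hzU
  choose q hq using fun i => exists_rat_near (z i) (half_pos δpos)
  have hqU : (fun i => (q i : ℝ)) ∈ {v : Fin n → ℝ | ∀ s, 0 < F s v} := by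
    apply hball
    rw [Metric.mem_ball, dist_pi_lt_iff δpos]
    intro i
    rw [Real.dist_eq, abs_sub_comm]
    calc |z i - (q i : ℝ)| < δ / 2 := hq i
    _ < δ := by linarith
  set β : Fin n → ℚ := q - Mτ *ᵥ (MB *ᵥ q) with hβdef
  have hcastβ : ∀ i, ((β i : ℚ) : ℝ)
      = ((fun j => (q j : ℝ)) - Mτr *ᵥ (MBr *ᵥ (fun j => (q j : ℝ)))) i := by
    intro i
    simp only [hβdef, Pi.sub_apply, Matrix.mulVec, dotProduct, hMτrdef, hMBrdef,
      Matrix.map_apply, hφdef, Rat.cast_sub, Rat.cast_sum, Rat.cast_mul, Rat.coe_castHom]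
  refine ⟨⟨β, ?_, ?_⟩, ⟨Mτr *ᵥ d, hy⟩⟩
  · intro t
    have h3 : ∑ i, b t i * β i = (MB *ᵥ β) t := by
      simp [Matrix.mulVec, dotProduct, hMBdef]
    rw [h3, hβdef]
    simp only [Matrix.mulVec_sub, Matrix.mulVec_mulVec]
    rw [← Matrix.mul_assoc, keyM]
    simp
  · intro s
    have h4 := hqU s
    simp only [Set.mem_setOf_eq, hFdef] at h4
    have h5 : (0:ℝ) < ∑ i, (a s i : ℝ) * ((β i : ℚ) : ℝ) := by
      refine lt_of_lt_of_eq h4 (Finset.sum_congr rfl fun i _ => ?_)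
      rw [hcastβ i]
    exact_mod_cast h5

/-- The `m`-th standard basis functional coefficient. -/
def eQ {n : ℕ} (m i : Fin n) : ℚ := if i = m then 1 else 0

lemma sum_eee_real {n : ℕ} (i₀ j₀ k₀ : Fin n) (v : Fin n → ℝ) :
    ∑ i, ((eQ i₀ i + eQ j₀ i - eQ k₀ i : ℚ) : ℝ) * v i = v i₀ + v j₀ - v k₀ := by
  have h : ∀ i : Fin n, ((eQ i₀ i + eQ j₀ i - eQ k₀ i : ℚ) : ℝ) * v i
      = ((if i = i₀ then v i else 0) + (if i = j₀ then v i else 0)) - (if i = k₀ then v i else 0) := by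
    intro i
    simp only [eQ]
    split_ifs <;> push_cast <;> ring
  rw [Finset.sum_congr rfl fun i _ => h i, Finset.sum_sub_distrib, Finset.sum_add_distrib]
  simp [Finset.sum_ite_eq']

lemma sum_eee_rat {n : ℕ} (i₀ j₀ k₀ : Fin n) (v : Fin n → ℚ) :
    ∑ i, (eQ i₀ i + eQ j₀ i - eQ k₀ i) * v i = v i₀ + v j₀ - v k₀ := by
  have h : ∀ i : Fin n, (eQ i₀ i + eQ j₀ i - eQ k₀ i) * v i
      = ((if i = i₀ then v i else 0) + (if i = j₀ then v i else 0)) - (if i = k₀ then v i else 0) := by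
    intro i
    simp only [eQ]
    split_ifs <;> ring
  rw [Finset.sum_congr rfl fun i _ => h i, Finset.sum_sub_distrib, Finset.sum_add_distrib]
  simp [Finset.sum_ite_eq']

lemma exists_int_scale {n : ℕ} (β' : Fin n → ℚ) :
    ∃ (β : Fin n → ℤ) (N : ℕ), 0 < N ∧ ∀ i, (β i : ℚ) = (N : ℚ) * β' i := by
  refine ⟨fun i => (β' i).num * ((∏ j ∈ Finset.univ.erase i, (β' j).den : ℕ) : ℤ),
    ∏ j, (β' j).den, Finset.prod_pos fun j _ => (β' j).pos, ?_⟩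
  intro i
  have hsplit : (∏ j, (β' j).den) = (β' i).den * ∏ j ∈ Finset.univ.erase i, (β' j).den :=
    (Finset.mul_prod_erase Finset.univ (fun j => (β' j).den) (Finset.mem_univ i)).symm
  have hden : ((β' i).den : ℚ) * β' i = ((β' i).num : ℚ) := by
    have hne : (((β' i).den : ℕ) : ℚ) ≠ 0 := by exact_mod_cast (β' i).pos.ne'
    have h := (div_eq_iff hne).mp (Rat.num_div_den (β' i))
    rw [h]
    ring
  push_cast [hsplit]
  rw [show ((β' i).den : ℚ) * (∏ j ∈ Finset.univ.erase i, ((β' j).den : ℚ)) * β' i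
      = (∏ j ∈ Finset.univ.erase i, ((β' j).den : ℚ)) * (((β' i).den : ℚ) * β' i) from by ring,
    hden]
  ring

lemma tendsto_zpow_pos {m : ℤ} (hm : 0 < m) :
    Tendsto (fun ε : ℝ => ε ^ m) (𝓝[>] (0:ℝ)) (𝓝 0) := by
  have h2 : Tendsto (fun ε : ℝ => ε ^ (m.toNat)) (𝓝 0) (𝓝 0) := by
    have := (continuous_pow m.toNat).tendsto (0:ℝ)
    rwa [zero_pow (by omega : m.toNat ≠ 0)] at this
  exact (h2.mono_left nhdsWithin_le_nhds).congr fun ε => by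
    rw [← zpow_natCast, Int.toNat_of_nonneg hm.le]

/-- Any diagonal sequential contraction of a real Lie algebra is equivalent to a
generalized Inönü–Wigner contraction with an integer signature. -/
theorem diagonal_sequential_contraction_equiv_genIW_integer
    (n : ℕ) (c c₀ : Fin n → Fin n → Fin n → ℝ)
    (hanti : ∀ i j k, c i j k = -(c j i k))
    (hjac : ∀ i j k m, ∑ l, (c i j l * c l k m + c k i l * c l j m + c j k l * c l i m) = 0)
    (f : Fin n → ℕ → ℝ)
    (hfne : ∀ i p, f i p ≠ 0)
    (hlim : ∀ i j k, Tendsto (fun p : ℕ => c i j k * f i p * f j p / f k p)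
      atTop (𝓝 (c₀ i j k))) :
    ∃ γ : Fin n → ℝ, (∀ i, γ i ≠ 0) ∧ ∃ β : Fin n → ℤ, ∀ i j k,
      Tendsto (fun ε : ℝ => c i j k * (γ i * γ j / γ k) * ε ^ (β i + β j - β k))
        (𝓝[>] (0 : ℝ)) (𝓝 (c₀ i j k)) := by
  classical
  have hglim : ∀ i j k, c i j k ≠ 0 →
      Tendsto (fun p => f i p * f j p / f k p) atTop (𝓝 (c₀ i j k / c i j k)) := by
    intro i j k hc
    have h := (hlim i j k).const_mul (c i j k)⁻¹
    rw [inv_mul_eq_div] at h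
    refine h.congr fun p => ?_
    rw [show (c i j k)⁻¹ * (c i j k * f i p * f j p / f k p)
        = ((c i j k)⁻¹ * c i j k) * (f i p * f j p / f k p) from by ring,
      inv_mul_cancel₀ hc, one_mul]
  let ι₀ := {t : Fin n × Fin n × Fin n // c t.1 t.2.1 t.2.2 ≠ 0 ∧ c₀ t.1 t.2.1 t.2.2 = 0}
  let ι₁ := {t : Fin n × Fin n × Fin n // c t.1 t.2.1 t.2.2 ≠ 0 ∧ c₀ t.1 t.2.1 t.2.2 ≠ 0}
  obtain ⟨⟨β', hβeq, hβpos⟩, y, hy⟩ :=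
    core_lemma (n := n)
      (a := fun (s : ι₀) i' => eQ s.1.1 i' + eQ s.1.2.1 i' - eQ s.1.2.2 i')
      (b := fun (t : ι₁) i' => eQ t.1.1 i' + eQ t.1.2.1 i' - eQ t.1.2.2 i')
      (x := fun p i' => -Real.log (f i' p))
      (d := fun t => -Real.log (c₀ t.1.1 t.1.2.1 t.1.2.2 / c t.1.1 t.1.2.1 t.1.2.2))
      (by
        rintro ⟨⟨i, j, k⟩, hc, hc0⟩
        show Tendsto (fun p => ∑ i', ((eQ i i' + eQ j i' - eQ k i' : ℚ) : ℝ)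
          * (-Real.log (f i' p))) atTop atTop
        have hre : ∀ p, ∑ i', ((eQ i i' + eQ j i' - eQ k i' : ℚ) : ℝ) * (-Real.log (f i' p))
            = -Real.log (f i p * f j p / f k p) := by
          intro p
          rw [sum_eee_real]
          rw [Real.log_div (mul_ne_zero (hfne i p) (hfne j p)) (hfne k p),
            Real.log_mul (hfne i p) (hfne j p)]
          ring
        have hg0 : Tendsto (fun p => f i p * f j p / f k p) atTop (𝓝 0) := by
          have h := hglim i j k hc
          rwa [hc0, zero_div] at h
        have hgt : Tendsto (fun p => f i p * f j p / f k p) atTop (𝓝[≠] (0:ℝ)) := by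
          refine tendsto_nhdsWithin_iff.mpr ⟨hg0, Eventually.of_forall fun p => ?_⟩
          simp only [Set.mem_compl_iff, Set.mem_singleton_iff]
          exact div_ne_zero (mul_ne_zero (hfne i p) (hfne j p)) (hfne k p)
        have hlog : Tendsto (fun p => Real.log (f i p * f j p / f k p)) atTop atBot :=
          Real.tendsto_log_nhdsNE_zero.comp hgt
        exact (tendsto_neg_atTop_iff.mpr hlog).congr fun p => (hre p).symm)
      (by
        rintro ⟨⟨i, j, k⟩, hc, hc0⟩
        show Tendsto (fun p => ∑ i', ((eQ i i' + eQ j i' - eQ k i' : ℚ) : ℝ)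
          * (-Real.log (f i' p))) atTop (𝓝 (-Real.log (c₀ i j k / c i j k)))
        have hre : ∀ p, ∑ i', ((eQ i i' + eQ j i' - eQ k i' : ℚ) : ℝ) * (-Real.log (f i' p))
            = -Real.log (f i p * f j p / f k p) := by
          intro p
          rw [sum_eee_real]
          rw [Real.log_div (mul_ne_zero (hfne i p) (hfne j p)) (hfne k p),
            Real.log_mul (hfne i p) (hfne j p)]
          ring
        have hL : c₀ i j k / c i j k ≠ 0 := div_ne_zero hc0 hc
        have hlog : Tendsto (fun p => Real.log (f i p * f j p / f k p)) atTop
            (𝓝 (Real.log (c₀ i j k / c i j k))) :=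
          Filter.Tendsto.comp (Real.continuousAt_log hL) (hglim i j k hc)
        exact hlog.neg.congr fun p => (hre p).symm)
  obtain ⟨β, N, hN, hβQ⟩ := exists_int_scale β'
  -- choose a point where all the relevant signs are settled
  have hsig : ∀ t : ι₁, ∀ᶠ p in atTop,
      0 < (c₀ t.1.1 t.1.2.1 t.1.2.2 / c t.1.1 t.1.2.1 t.1.2.2)
        * (f t.1.1 p * f t.1.2.1 p / f t.1.2.2 p) := by
    rintro ⟨⟨i, j, k⟩, hc, hc0⟩
    have hL : c₀ i j k / c i j k ≠ 0 := div_ne_zero hc0 hc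
    have h := (hglim i j k hc).const_mul (c₀ i j k / c i j k)
    exact h.eventually (eventually_gt_nhds (mul_self_pos.mpr hL))
  obtain ⟨p0, hp0⟩ := (eventually_all.mpr hsig).exists
  set S : Fin n → ℝ := fun m => if 0 < f m p0 then 1 else -1 with hSdef
  have hS1 : ∀ m, S m = 1 ∨ S m = -1 := by
    intro m
    by_cases h : 0 < f m p0
    · left; simp [hSdef, h]
    · right; simp [hSdef, h]
  have hSf : ∀ m, 0 < S m * f m p0 := by
    intro m
    rcases lt_trichotomy (f m p0) 0 with h | h | h
    · have h' : ¬ (0 < f m p0) := by linarith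
      simp only [hSdef, if_neg h']
      nlinarith
    · exact absurd h (hfne m p0)
    · simp only [hSdef, if_pos h]
      nlinarith
  have hSne : ∀ m, S m ≠ 0 := by
    intro m
    rcases hS1 m with h | h <;> rw [h] <;> norm_num
  refine ⟨fun m => S m * Real.exp (-(y m)),
    fun m => mul_ne_zero (hSne m) (Real.exp_ne_zero _), β, ?_⟩
  intro i j k
  show Tendsto (fun ε : ℝ => c i j k
      * (S i * Real.exp (-(y i)) * (S j * Real.exp (-(y j))) / (S k * Real.exp (-(y k))))
      * ε ^ (β i + β j - β k)) (𝓝[>] (0 : ℝ)) (𝓝 (c₀ i j k))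
  by_cases hc : c i j k = 0
  · have hzero : c₀ i j k = 0 := by
      have h8 : (fun p : ℕ => c i j k * f i p * f j p / f k p) = fun _ => (0:ℝ) := by
        funext p
        rw [hc]
        ring
      have h := hlim i j k
      rw [h8] at h
      exact tendsto_nhds_unique h tendsto_const_nhds
    simp only [hc, hzero, zero_mul]
    exact tendsto_const_nhds
  by_cases hc0 : c₀ i j k = 0
  · have hpos' : (0:ℚ) < ∑ i', (eQ i i' + eQ j i' - eQ k i') * β' i' :=
      hβpos ⟨(i, j, k), hc, hc0⟩
    rw [sum_eee_rat] at hpos'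
    have hm : 0 < β i + β j - β k := by
      have h9 : ((β i + β j - β k : ℤ) : ℚ) = (N : ℚ) * (β' i + β' j - β' k) := by
        push_cast [hβQ]
        ring
      have h10 : (0:ℚ) < (N : ℚ) * (β' i + β' j - β' k) :=
        mul_pos (by exact_mod_cast hN) hpos'
      rw [← h9] at h10
      exact_mod_cast h10
    rw [hc0]
    simpa using (tendsto_zpow_pos hm).const_mul
      (c i j k * (S i * Real.exp (-(y i)) * (S j * Real.exp (-(y j)))
        / (S k * Real.exp (-(y k)))))
  · -- the convergent (nonzero limit) case
    have heq' : ∑ i', (eQ i i' + eQ j i' - eQ k i') * β' i' = 0 :=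
      hβeq ⟨(i, j, k), hc, hc0⟩
    rw [sum_eee_rat] at heq'
    have hz : β i + β j - β k = 0 := by
      have h9 : ((β i + β j - β k : ℤ) : ℚ) = (N : ℚ) * (β' i + β' j - β' k) := by
        push_cast [hβQ]
        ring
      rw [heq', mul_zero] at h9
      exact_mod_cast h9
    have hL : c₀ i j k / c i j k ≠ 0 := div_ne_zero hc0 hc
    have hyd : ∑ i', ((eQ i i' + eQ j i' - eQ k i' : ℚ) : ℝ) * y i'
        = -Real.log (c₀ i j k / c i j k) := hy ⟨(i, j, k), hc, hc0⟩
    rw [sum_eee_real] at hyd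
    have hexp : Real.exp (-(y i)) * Real.exp (-(y j)) / Real.exp (-(y k))
        = |c₀ i j k / c i j k| := by
      rw [← Real.exp_add, ← Real.exp_sub]
      rw [show -(y i) + -(y j) - -(y k) = -(y i + y j - y k) from by ring, hyd, neg_neg]
      rw [← Real.log_abs, Real.exp_log (abs_pos.mpr hL)]
    have hu : 0 < (S i * S j / S k) * (f i p0 * f j p0 / f k p0) := by
      have h1 := hSf i
      have h2 := hSf j
      have h3 := hSf k
      have heq2 : (S i * S j / S k) * (f i p0 * f j p0 / f k p0)
          = (S i * f i p0) * (S j * f j p0) / (S k * f k p0) := by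
        rw [div_mul_div_comm]
        ring_nf
      rw [heq2]
      exact div_pos (mul_pos h1 h2) h3
    have hGne : f i p0 * f j p0 / f k p0 ≠ 0 :=
      div_ne_zero (mul_ne_zero (hfne i p0) (hfne j p0)) (hfne k p0)
    have h4 : 0 < (c₀ i j k / c i j k) * (f i p0 * f j p0 / f k p0) :=
      hp0 ⟨(i, j, k), hc, hc0⟩
    have huL : 0 < (S i * S j / S k) * (c₀ i j k / c i j k) := by
      have habs : ∀ u L G : ℝ, G ≠ 0 → u * L = ((u * G) * (L * G)) / (G * G) := by
        intro u L G hG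
        rw [eq_div_iff (mul_ne_zero hG hG)]
        ring
      rw [habs (S i * S j / S k) (c₀ i j k / c i j k) (f i p0 * f j p0 / f k p0) hGne]
      exact div_pos (mul_pos hu h4) (mul_self_pos.mpr hGne)
    have hu1 : S i * S j / S k = 1 ∨ S i * S j / S k = -1 := by
      rcases hS1 i with h | h <;> rcases hS1 j with h' | h' <;> rcases hS1 k with h'' | h'' <;>
        rw [h, h', h''] <;> norm_num
    have hsgn : (S i * S j / S k) * |c₀ i j k / c i j k| = c₀ i j k / c i j k := by
      rcases hu1 with h | h
      · rw [h, one_mul]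
        rw [h, one_mul] at huL
        exact abs_of_pos huL
      · rw [h] at huL ⊢
        have hneg : c₀ i j k / c i j k < 0 := by nlinarith
        rw [abs_of_neg hneg]
        ring
    have hγL : S i * Real.exp (-(y i)) * (S j * Real.exp (-(y j)))
        / (S k * Real.exp (-(y k))) = c₀ i j k / c i j k := by
      rw [show S i * Real.exp (-(y i)) * (S j * Real.exp (-(y j)))
          = (S i * S j) * (Real.exp (-(y i)) * Real.exp (-(y j))) from by ring,
        mul_div_mul_comm, hexp, hsgn]
    have hfun : (fun ε : ℝ => c i j k
        * (S i * Real.exp (-(y i)) * (S j * Real.exp (-(y j))) / (S k * Real.exp (-(y k))))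
        * ε ^ (β i + β j - β k)) = fun _ => c₀ i j k := by
      funext ε
      rw [hz, zpow_zero, mul_one, hγL, mul_comm, div_mul_cancel₀ _ hc]
    rw [hfun]
    exact tendsto_const_nhds
end

section
/- Let c : Fin n → Fin n → Fin n → ℝ be the structure constants of an n-dimensional real Lie algebra, let f : Fin n → ℝ → ℝ be such that each f i is continuous on (0,1] and f i ε ≠ 0 for every ε ∈ (0,1], and let c₀ : Fin n → Fin n → Fin n → ℝ be such that for all i, j, k the function ε ↦ c i j k * (f i ε) * (f j ε) / (f k ε) tends to c₀ i j k as ε → 0⁺. Then there exist γ : Fin n → ℝ with γ i ≠ 0 for all i, and β : Fin n → ℤ, such that: (1) for all i, j, k the function ε ↦ c i j k * (γ i * γ j / γ k) * ε ^ (β i + β j - β k) tends to c₀ i j k as ε → 0⁺; (2) β j ≥ 0 for every index j such that f j tends to a finite limit as ε → 0⁺; and (3) β j < 0 for every index j such that |f j ε| tends to ∞ as ε → 0⁺. -/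
open Finset

noncomputable def chi (K : Type*) [Field K] [LinearOrder K] [IsStrictOrderedRing K] (P : Prop) : K :=
  by classical exact if P then 1 else 0

section Gale
variable {K : Type*} [Field K] [LinearOrder K] [IsStrictOrderedRing K]

lemma chi_nonneg (P : Prop) : (0:K) ≤ chi K P := by
  unfold chi; split <;> norm_num

lemma chi_of {P : Prop} (h : P) : chi K P = 1 := by
  unfold chi; split <;> simp_all

lemma chi_not {P : Prop} (h : ¬ P) : chi K P = 0 := by
  unfold chi; split <;> simp_all

lemma chi_mul_nonneg {P : Prop} {z : K} (h : P → 0 ≤ z) : 0 ≤ chi K P * z := by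
  unfold chi; split
  · simpa using h ‹P›
  · simp

theorem gale_alternative : ∀ (d : ℕ) (ι : Type) [Fintype ι] (A : ι → Fin d → K) (b : ι → K),
    (∃ x : Fin d → K, ∀ i, b i ≤ ∑ j, A i j * x j) ∨
    (∃ y : ι → K, (∀ i, 0 ≤ y i) ∧ (∀ j, ∑ i, y i * A i j = 0) ∧ 0 < ∑ i, y i * b i) := by
  intro d
  induction d with
  | zero =>
    intro ι _ A b
    by_cases h : ∀ i, b i ≤ 0
    · exact Or.inl ⟨0, fun i => by simpa using h i⟩
    · push_neg at h
      obtain ⟨i₀, hi₀⟩ := h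
      classical
      refine Or.inr ⟨fun i => if i = i₀ then 1 else 0, ?_, ?_, ?_⟩
      · intro i; dsimp only; split <;> norm_num
      · exact fun j => j.elim0
      · simpa [ite_mul] using hi₀
  | succ d ih =>
    intro ι _ A b
    classical
    let α : ι → K := fun i => A i (Fin.last d)
    let A' : ι → Fin d → K := fun i j => A i j.castSucc
    let B : (ι ⊕ ι × ι) → Fin d → K := fun i' j =>
      Sum.casesOn i' (fun z => chi K (α z = 0) * A' z j)
        (fun pq => chi K (0 < α pq.1) * chi K (α pq.2 < 0) *
          ((-α pq.2) * A' pq.1 j + α pq.1 * A' pq.2 j))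
    let c' : (ι ⊕ ι × ι) → K := fun i' =>
      Sum.casesOn i' (fun z => chi K (α z = 0) * b z)
        (fun pq => chi K (0 < α pq.1) * chi K (α pq.2 < 0) *
          ((-α pq.2) * b pq.1 + α pq.1 * b pq.2))
    rcases ih (ι ⊕ ι × ι) B c' with ⟨x', hx'⟩ | ⟨y', hy0, hyA, hyb⟩
    · -- primal case
      let S : ι → K := fun i => b i - ∑ j, A' i j * x' j
      have hz : ∀ i, α i = 0 → S i ≤ 0 := by
        intro i h0
        have h1 := hx' (Sum.inl i)
        simp only [B, c', chi_of h0, one_mul] at h1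
        simp only [S]
        linarith
      have hpq : ∀ p q, 0 < α p → α q < 0 → S p / α p ≤ S q / α q := by
        intro p q hp hq
        have h1 := hx' (Sum.inr (p, q))
        simp only [B, c', chi_of hp, chi_of hq, one_mul, mul_one] at h1
        have hsum : ∑ j, ((-α q) * A' p j + α p * A' q j) * x' j
            = (-α q) * ∑ j, A' p j * x' j + α p * ∑ j, A' q j * x' j := by
          rw [Finset.mul_sum, Finset.mul_sum, ← Finset.sum_add_distrib]
          exact Finset.sum_congr rfl fun j _ => by ring
        rw [hsum] at h1
        have key : (-α q) * S p + α p * S q ≤ 0 := by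
          simp only [S]; nlinarith
        have hq' : (0:K) < -α q := by linarith
        rw [show S q / α q = (-S q)/(-α q) by rw [neg_div_neg_eq], div_le_div_iff₀ hp hq']
        nlinarith
      have ht : ∃ t : K, (∀ p, 0 < α p → S p / α p ≤ t) ∧ (∀ q, α q < 0 → t ≤ S q / α q) := by
        rcases (univ.filter (fun q => α q < 0)).eq_empty_or_nonempty with hN | hN
        · rcases (univ.filter (fun p => 0 < α p)).eq_empty_or_nonempty with hP | hP
          · refine ⟨0, fun p hp => ?_, fun q hq => ?_⟩
            · exact absurd (by simp only [Finset.mem_filter, Finset.mem_univ, true_and]; exact hp : p ∈ univ.filter (fun p => 0 < α p))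
                (Finset.eq_empty_iff_forall_notMem.mp hP p)
            · exact absurd (by simp only [Finset.mem_filter, Finset.mem_univ, true_and]; exact hq : q ∈ univ.filter (fun q => α q < 0))
                (Finset.eq_empty_iff_forall_notMem.mp hN q)
          · refine ⟨(univ.filter (fun p => 0 < α p)).sup' hP (fun p => S p / α p),
              fun p hp => by exact Finset.le_sup' (fun p => S p / α p) (Finset.mem_filter.mpr ⟨Finset.mem_univ p, hp⟩), fun q hq => ?_⟩
            exact absurd (by simp only [Finset.mem_filter, Finset.mem_univ, true_and]; exact hq : q ∈ univ.filter (fun q => α q < 0))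
              (Finset.eq_empty_iff_forall_notMem.mp hN q)
        · refine ⟨(univ.filter (fun q => α q < 0)).inf' hN (fun q => S q / α q),
            fun p hp => ?_, fun q hq => by exact Finset.inf'_le (fun q => S q / α q) (Finset.mem_filter.mpr ⟨Finset.mem_univ q, hq⟩)⟩
          apply Finset.le_inf'
          intro q hqm
          exact hpq p q hp (Finset.mem_filter.mp hqm).2
      obtain ⟨t, htP, htN⟩ := ht
      refine Or.inl ⟨Fin.snoc x' t, ?_⟩
      intro i
      have hexp : ∑ j, A i j * (Fin.snoc x' t : Fin (d+1) → K) j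
          = (∑ j, A' i j * x' j) + α i * t := by
        rw [Fin.sum_univ_castSucc]
        simp [A', α]
      rw [hexp]
      have hgoal : S i ≤ α i * t → b i ≤ (∑ j, A' i j * x' j) + α i * t := by
        intro h; simp only [S] at h; linarith
      apply hgoal
      rcases lt_trichotomy (α i) 0 with hlt | heq | hgt
      · have h2 := htN i hlt
        have hne : α i ≠ 0 := ne_of_lt hlt
        have h3 : α i * (S i / α i) = S i := by field_simp
        have h4 : α i * (S i / α i) ≤ α i * t :=
          mul_le_mul_of_nonpos_left h2 (le_of_lt hlt)
        rw [h3] at h4; exact h4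
      · rw [heq]; simpa using hz i heq
      · have h2 := htP i hgt
        rw [div_le_iff₀ hgt] at h2
        linarith
    · -- dual case
      let y : ι → K := fun i =>
        chi K (α i = 0) * y' (Sum.inl i)
        + chi K (0 < α i) * ∑ q, chi K (α q < 0) * (y' (Sum.inr (i, q)) * (-α q))
        + chi K (α i < 0) * ∑ p, chi K (0 < α p) * (y' (Sum.inr (p, i)) * α p)
      have transfer : ∀ v : ι → K, ∑ i, y i * v i = ∑ i', y' i' *
          (Sum.casesOn i' (fun z => chi K (α z = 0) * v z)
            (fun pq => chi K (0 < α pq.1) * chi K (α pq.2 < 0) *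
              ((-α pq.2) * v pq.1 + α pq.1 * v pq.2)) : K) := by
        intro v
        have lhs : ∑ i, y i * v i
            = (∑ i, chi K (α i = 0) * y' (Sum.inl i) * v i)
            + ((∑ i, ∑ q, chi K (0 < α i) * chi K (α q < 0) * y' (Sum.inr (i, q)) * (-α q) * v i)
            + (∑ i, ∑ p, chi K (0 < α p) * chi K (α i < 0) * y' (Sum.inr (p, i)) * (α p) * v i)) := by
          rw [← Finset.sum_add_distrib, ← Finset.sum_add_distrib]
          refine Finset.sum_congr rfl fun i _ => ?_
          have e1 : (chi K (0 < α i) * ∑ q, chi K (α q < 0) * (y' (Sum.inr (i, q)) * (-α q))) * v i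
              = ∑ q, chi K (0 < α i) * chi K (α q < 0) * y' (Sum.inr (i, q)) * (-α q) * v i := by
            rw [Finset.mul_sum, Finset.sum_mul]
            exact Finset.sum_congr rfl fun q _ => by ring
          have e3 : (chi K (α i < 0) * ∑ p, chi K (0 < α p) * (y' (Sum.inr (p, i)) * α p)) * v i
              = ∑ p, chi K (0 < α p) * chi K (α i < 0) * y' (Sum.inr (p, i)) * (α p) * v i := by
            rw [Finset.mul_sum, Finset.sum_mul]
            exact Finset.sum_congr rfl fun p _ => by ring
          show (chi K (α i = 0) * y' (Sum.inl i)
            + chi K (0 < α i) * ∑ q, chi K (α q < 0) * (y' (Sum.inr (i, q)) * (-α q))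
            + chi K (α i < 0) * ∑ p, chi K (0 < α p) * (y' (Sum.inr (p, i)) * α p)) * v i = _
          rw [add_mul, add_mul, e1, e3, add_assoc]
        rw [lhs, Fintype.sum_sum_type, Fintype.sum_prod_type]
        dsimp only
        congr 1
        · exact Finset.sum_congr rfl fun z _ => by ring
        have hcomm : (∑ i, ∑ p, chi K (0 < α p) * chi K (α i < 0) * y' (Sum.inr (p, i)) * (α p) * v i)
            = ∑ p, ∑ i, chi K (0 < α p) * chi K (α i < 0) * y' (Sum.inr (p, i)) * (α p) * v i :=
          Finset.sum_comm
        rw [hcomm, ← Finset.sum_add_distrib]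
        refine Finset.sum_congr rfl fun p _ => ?_
        rw [← Finset.sum_add_distrib]
        exact Finset.sum_congr rfl fun q _ => by ring
      refine Or.inr ⟨y, ?_, ?_, ?_⟩
      · intro i
        have h1 : 0 ≤ chi K (α i = 0) * y' (Sum.inl i) := chi_mul_nonneg fun _ => hy0 _
        have h2 : 0 ≤ chi K (0 < α i) * ∑ q, chi K (α q < 0) * (y' (Sum.inr (i, q)) * (-α q)) := by
          refine chi_mul_nonneg fun _ => Finset.sum_nonneg fun q _ => ?_
          exact chi_mul_nonneg fun hq => mul_nonneg (hy0 _) (by linarith)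
        have h3 : 0 ≤ chi K (α i < 0) * ∑ p, chi K (0 < α p) * (y' (Sum.inr (p, i)) * α p) := by
          refine chi_mul_nonneg fun _ => Finset.sum_nonneg fun p _ => ?_
          exact chi_mul_nonneg fun hp => mul_nonneg (hy0 _) (le_of_lt hp)
        simp only [y]
        linarith
      · intro j
        refine Fin.lastCases ?_ ?_ j
        · rw [transfer (fun i => A i (Fin.last d))]
          refine Finset.sum_eq_zero fun i' _ => ?_
          rcases i' with z | ⟨p, q⟩
          · simp only [Sum.casesOn]
            by_cases h0 : α z = 0
            · simp only [α] at h0; rw [h0]; ring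
            · rw [chi_not h0]; ring
          · simp only [Sum.casesOn]
            have : (-α q) * A p (Fin.last d) + α p * A q (Fin.last d) = 0 := by
              simp only [α]; ring
            rw [this]; ring
        · intro j₀
          have := hyA j₀
          rw [transfer (fun i => A i j₀.castSucc)]
          convert this using 2
      · rw [transfer b]
        convert hyb using 2

end Gale

open Filter Topology Finset

section Helpers
variable {K : Type*} [Field K] [LinearOrder K] [IsStrictOrderedRing K]

lemma dot_eval {n : ℕ} (y : Fin n → K) (i j k : Fin n) :
    ∑ l, (((if l = i then (1:K) else 0) + (if l = j then 1 else 0) - (if l = k then 1 else 0)) * y l)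
      = y i + y j - y k := by
  classical
  simp [add_mul, sub_mul, ite_mul, Finset.sum_add_distrib, Finset.sum_sub_distrib,
    Finset.sum_ite_eq']

lemma dot_single {n : ℕ} (y : Fin n → K) (j : Fin n) :
    ∑ l, (if l = j then (1:K) else 0) * y l = y j := by
  classical
  simp [ite_mul, Finset.sum_ite_eq']

end Helpers

lemma sign_constant {f : ℝ → ℝ} (hc : ContinuousOn f (Set.Ioc 0 1))
    (hne : ∀ ε ∈ Set.Ioc (0:ℝ) 1, f ε ≠ 0) {ε : ℝ} (hε : ε ∈ Set.Ioc (0:ℝ) 1) :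
    0 < f ε ↔ 0 < f 1 := by
  have h1 : (1:ℝ) ∈ Set.Ioc (0:ℝ) 1 := by norm_num
  have hsub : Set.Icc ε 1 ⊆ Set.Ioc (0:ℝ) 1 :=
    fun x hx => ⟨lt_of_lt_of_le hε.1 hx.1, le_trans hx.2 h1.2⟩
  have hc' : ContinuousOn f (Set.Icc ε 1) := hc.mono hsub
  constructor
  · intro hp; by_contra hn
    have hn' : f 1 < 0 := lt_of_le_of_ne (not_lt.mp hn) (hne 1 h1)
    obtain ⟨x, hx, hfx⟩ := intermediate_value_Icc' hε.2 hc'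
      (by constructor <;> linarith : (0:ℝ) ∈ Set.Icc (f 1) (f ε))
    exact hne x (hsub hx) hfx
  · intro hp; by_contra hn
    have hn' : f ε < 0 := lt_of_le_of_ne (not_lt.mp hn) (hne ε hε)
    obtain ⟨x, hx, hfx⟩ := intermediate_value_Icc hε.2 hc'
      (by constructor <;> linarith : (0:ℝ) ∈ Set.Icc (f ε) (f 1))
    exact hne x (hsub hx) hfx

lemma rat_int_scale {n : ℕ} (q : Fin n → ℚ) :
    ∃ (N : ℕ) (β : Fin n → ℤ), 0 < N ∧ ∀ j, (β j : ℚ) = q j * N := by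
  classical
  refine ⟨∏ j, (q j).den, fun j => (q j).num * (((∏ j, (q j).den) / (q j).den : ℕ) : ℤ), ?_, ?_⟩
  · exact Finset.prod_pos fun j _ => Nat.pos_of_ne_zero (q j).den_nz
  · intro j
    have hd : (q j).den ∣ ∏ j, (q j).den := Finset.dvd_prod_of_mem _ (Finset.mem_univ j)
    have hden : ((q j).den : ℚ) ≠ 0 := by exact_mod_cast (q j).den_nz
    have hcast : (((∏ j, (q j).den) / (q j).den : ℕ) : ℚ)
        = ((∏ j, (q j).den : ℕ) : ℚ) / ((q j).den : ℚ) := Nat.cast_div hd hden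
    rw [Int.cast_mul, Int.cast_natCast, hcast]
    rw [show q j * ((∏ j, (q j).den : ℕ) : ℚ) = ((q j).num / ((q j).den:ℚ)) * ((∏ j, (q j).den : ℕ) : ℚ) by rw [Rat.num_div_den]]
    field_simp

open Filter Topology

/-- Refinement of the theorem on diagonal contractions: the integer signature `β`
can be chosen so that `β j ≥ 0` whenever `f j` has a finite limit at `ε → 0⁺` and
`β j < 0` whenever `|f j|` tends to infinity at `ε → 0⁺`. -/
theorem diagonal_contraction_equiv_genIW_integer_sign_refinement
    (n : ℕ) (c c₀ : Fin n → Fin n → Fin n → ℝ)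
    (hanti : ∀ i j k, c i j k = -(c j i k))
    (hjac : ∀ i j k m, ∑ l, (c i j l * c l k m + c k i l * c l j m + c j k l * c l i m) = 0)
    (f : Fin n → ℝ → ℝ)
    (hfcont : ∀ i, ContinuousOn (f i) (Set.Ioc 0 1))
    (hfne : ∀ i, ∀ ε ∈ Set.Ioc (0 : ℝ) 1, f i ε ≠ 0)
    (hlim : ∀ i j k, Tendsto (fun ε : ℝ => c i j k * f i ε * f j ε / f k ε)
      (𝓝[>] (0 : ℝ)) (𝓝 (c₀ i j k))) :
    ∃ γ : Fin n → ℝ, (∀ i, γ i ≠ 0) ∧ ∃ β : Fin n → ℤ,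
      (∀ i j k, Tendsto (fun ε : ℝ => c i j k * (γ i * γ j / γ k) * ε ^ (β i + β j - β k))
        (𝓝[>] (0 : ℝ)) (𝓝 (c₀ i j k))) ∧
      (∀ j, (∃ L : ℝ, Tendsto (f j) (𝓝[>] (0 : ℝ)) (𝓝 L)) → 0 ≤ β j) ∧
      (∀ j, Tendsto (fun ε : ℝ => |f j ε|) (𝓝[>] (0 : ℝ)) atTop → β j < 0) := by
  classical
  have hIoc : Set.Ioc (0:ℝ) 1 ∈ 𝓝[>] (0:ℝ) :=
    Ioc_mem_nhdsGT_of_mem (by constructor <;> norm_num)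
  set g : Fin n → ℝ → ℝ := fun i ε => Real.log |f i ε| with hg
  -- limits of the quotients
  have hquot : ∀ i j k : Fin n, c i j k ≠ 0 →
      Tendsto (fun ε : ℝ => f i ε * f j ε / f k ε) (𝓝[>] (0:ℝ)) (𝓝 (c₀ i j k / c i j k)) := by
    intro i j k hc
    have h1 := (hlim i j k).const_mul (c i j k)⁻¹
    have h2 : ∀ ε : ℝ, (c i j k)⁻¹ * (c i j k * f i ε * f j ε / f k ε)
        = f i ε * f j ε / f k ε := by
      intro ε
      rw [div_eq_mul_inv, div_eq_mul_inv,
        show (c i j k)⁻¹ * (c i j k * f i ε * f j ε * (f k ε)⁻¹)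
          = ((c i j k)⁻¹ * c i j k) * (f i ε * f j ε * (f k ε)⁻¹) from by ring,
        inv_mul_cancel₀ hc, one_mul]
    have h3 : (c i j k)⁻¹ * c₀ i j k = c₀ i j k / c i j k := inv_mul_eq_div _ _
    rw [← h3]
    exact h1.congr h2
  set Et : Fin n × Fin n × Fin n → Prop :=
    fun t => c t.1 t.2.1 t.2.2 ≠ 0 ∧ c₀ t.1 t.2.1 t.2.2 ≠ 0 with hEt
  set Pt : Fin n × Fin n × Fin n → Prop :=
    fun t => c t.1 t.2.1 t.2.2 ≠ 0 ∧ c₀ t.1 t.2.1 t.2.2 = 0 with hPt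
  set Fs : Fin n → Prop := fun j => ∃ L, Tendsto (f j) (𝓝[>] (0:ℝ)) (𝓝 L) with hFs
  set Is : Fin n → Prop := fun j => Tendsto (fun ε => |f j ε|) (𝓝[>] (0:ℝ)) atTop with hIs
  have hEconv : ∀ t, Et t → Tendsto (fun ε => g t.1 ε + g t.2.1 ε - g t.2.2 ε) (𝓝[>] (0:ℝ))
      (𝓝 (Real.log |c₀ t.1 t.2.1 t.2.2 / c t.1 t.2.1 t.2.2|)) := by
    rintro ⟨i, j, k⟩ ⟨hc, hc0⟩
    have hr : c₀ i j k / c i j k ≠ 0 := div_ne_zero hc0 hc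
    have h1 : Tendsto (fun ε => |f i ε * f j ε / f k ε|) (𝓝[>] (0:ℝ)) (𝓝 |c₀ i j k / c i j k|) :=
      (hquot i j k hc).abs
    have h2 := (Real.continuousAt_log (abs_ne_zero.mpr hr)).tendsto.comp h1
    refine Tendsto.congr' ?_ h2
    filter_upwards [hIoc] with ε hε
    have hi := hfne i ε hε; have hj := hfne j ε hε; have hk := hfne k ε hε
    show Real.log |f i ε * f j ε / f k ε| = g i ε + g j ε - g k ε
    rw [abs_div, abs_mul,
      Real.log_div (mul_ne_zero (abs_ne_zero.mpr hi) (abs_ne_zero.mpr hj)) (abs_ne_zero.mpr hk),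
      Real.log_mul (abs_ne_zero.mpr hi) (abs_ne_zero.mpr hj)]
  have hPdiv : ∀ t, Pt t → Tendsto (fun ε => g t.1 ε + g t.2.1 ε - g t.2.2 ε)
      (𝓝[>] (0:ℝ)) atBot := by
    rintro ⟨i, j, k⟩ ⟨hc, hc0⟩
    have h0 : Tendsto (fun ε : ℝ => f i ε * f j ε / f k ε) (𝓝[>] (0:ℝ)) (𝓝 0) := by
      have := hquot i j k hc; rwa [hc0, zero_div] at this
    have h1 : Tendsto (fun ε : ℝ => |f i ε * f j ε / f k ε|) (𝓝[>] (0:ℝ)) (𝓝[>] (0:ℝ)) := by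
      rw [tendsto_nhdsWithin_iff]
      constructor
      · simpa using h0.abs
      · filter_upwards [hIoc] with ε hε
        exact abs_pos.mpr (div_ne_zero (mul_ne_zero (hfne i ε hε) (hfne j ε hε)) (hfne k ε hε))
    have h2 := Real.tendsto_log_nhdsGT_zero.comp h1
    refine Tendsto.congr' ?_ h2
    filter_upwards [hIoc] with ε hε
    have hi := hfne i ε hε; have hj := hfne j ε hε; have hk := hfne k ε hε
    show Real.log |f i ε * f j ε / f k ε| = g i ε + g j ε - g k ε
    rw [abs_div, abs_mul,
      Real.log_div (mul_ne_zero (abs_ne_zero.mpr hi) (abs_ne_zero.mpr hj)) (abs_ne_zero.mpr hk),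
      Real.log_mul (abs_ne_zero.mpr hi) (abs_ne_zero.mpr hj)]
  have hFbd : ∀ j, Fs j → ∃ C, ∀ᶠ ε in 𝓝[>] (0:ℝ), g j ε ≤ C := by
    rintro j ⟨L, hL⟩
    refine ⟨Real.log (|L| + 1), ?_⟩
    have h1 : ∀ᶠ ε in 𝓝[>] (0:ℝ), |f j ε| < |L| + 1 :=
      hL.abs (Iio_mem_nhds (by linarith [abs_nonneg L]))
    filter_upwards [h1] with ε hε
    rcases eq_or_lt_of_le (abs_nonneg (f j ε)) with h0 | h0
    · show Real.log |f j ε| ≤ _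
      rw [← h0, Real.log_zero]
      exact Real.log_nonneg (by linarith [abs_nonneg L])
    · exact Real.log_le_log h0 hε.le
  have hIdivg : ∀ j, Is j → Tendsto (fun ε => g j ε) (𝓝[>] (0:ℝ)) atTop := by
    intro j h
    exact Real.tendsto_log_atTop.comp h
  -- the linear programming data over ℚ
  set eQ : Fin n → Fin n → ℚ := fun j l => if l = j then 1 else 0 with heQ
  set rowQ : Fin n × Fin n × Fin n → Fin n → ℚ :=
    fun t l => eQ t.1 l + eQ t.2.1 l - eQ t.2.2 l with hrowQ
  set A : ((Fin n × Fin n × Fin n) ⊕ ((Fin n × Fin n × Fin n) ⊕ ((Fin n × Fin n × Fin n) ⊕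
      (Fin n ⊕ Fin n)))) → Fin n → ℚ := fun r l =>
    match r with
    | Sum.inl s => chi ℚ (Et s) * rowQ s l
    | Sum.inr (Sum.inl s) => chi ℚ (Et s) * (-(rowQ s l))
    | Sum.inr (Sum.inr (Sum.inl t)) => chi ℚ (Pt t) * rowQ t l
    | Sum.inr (Sum.inr (Sum.inr (Sum.inl j))) => chi ℚ (Fs j) * eQ j l
    | Sum.inr (Sum.inr (Sum.inr (Sum.inr j))) => chi ℚ (Is j) * (-(eQ j l)) with hA
  set b : ((Fin n × Fin n × Fin n) ⊕ ((Fin n × Fin n × Fin n) ⊕ ((Fin n × Fin n × Fin n) ⊕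
      (Fin n ⊕ Fin n)))) → ℚ := fun r =>
    match r with
    | Sum.inl _ => 0
    | Sum.inr (Sum.inl _) => 0
    | Sum.inr (Sum.inr (Sum.inl t)) => chi ℚ (Pt t)
    | Sum.inr (Sum.inr (Sum.inr (Sum.inl _))) => 0
    | Sum.inr (Sum.inr (Sum.inr (Sum.inr j))) => chi ℚ (Is j) with hb
  rcases gale_alternative n _ A b with ⟨q, hq⟩ | ⟨y, hy0, hyA, hyb⟩
  · -- PRIMAL CASE: extract the rational solution
    have hEq : ∀ s : Fin n × Fin n × Fin n, Et s → q s.1 + q s.2.1 - q s.2.2 = 0 := by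
      intro s hs
      have h1 := hq (Sum.inl s)
      have h2 := hq (Sum.inr (Sum.inl s))
      simp only [hA, hb, chi_of hs, one_mul, hrowQ, heQ] at h1 h2
      rw [dot_eval q s.1 s.2.1 s.2.2] at h1
      simp only [neg_mul, Finset.sum_neg_distrib] at h2
      rw [dot_eval q s.1 s.2.1 s.2.2] at h2
      linarith
    have hPq : ∀ t : Fin n × Fin n × Fin n, Pt t → 1 ≤ q t.1 + q t.2.1 - q t.2.2 := by
      intro t ht
      have h1 := hq (Sum.inr (Sum.inr (Sum.inl t)))
      simp only [hA, hb, chi_of ht, one_mul, hrowQ, heQ] at h1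
      rw [dot_eval q t.1 t.2.1 t.2.2] at h1
      exact h1
    have hFq : ∀ j, Fs j → 0 ≤ q j := by
      intro j hj
      have h1 := hq (Sum.inr (Sum.inr (Sum.inr (Sum.inl j))))
      simp only [hA, hb, chi_of hj, one_mul, heQ] at h1
      rwa [dot_single q j] at h1
    have hIq : ∀ j, Is j → q j ≤ -1 := by
      intro j hj
      have h1 := hq (Sum.inr (Sum.inr (Sum.inr (Sum.inr j))))
      simp only [hA, hb, chi_of hj, one_mul, heQ] at h1
      simp only [neg_mul, Finset.sum_neg_distrib] at h1
      rw [dot_single q j] at h1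
      linarith
    obtain ⟨N, β, hN, hβ⟩ := rat_int_scale q
    have hNQ : (1:ℚ) ≤ (N:ℚ) := by exact_mod_cast hN
    have hEβ : ∀ s : Fin n × Fin n × Fin n, Et s → β s.1 + β s.2.1 - β s.2.2 = 0 := by
      intro s hs
      have h2 : (q s.1 + q s.2.1 - q s.2.2) * N = 0 := by rw [hEq s hs]; ring
      have h3 : ((β s.1 + β s.2.1 - β s.2.2 : ℤ) : ℚ) = 0 := by
        push_cast
        rw [hβ s.1, hβ s.2.1, hβ s.2.2]
        linear_combination h2
      exact_mod_cast h3
    have hPβ : ∀ t : Fin n × Fin n × Fin n, Pt t → 0 < β t.1 + β t.2.1 - β t.2.2 := by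
      intro t ht
      have h3 : (0:ℚ) < ((β t.1 + β t.2.1 - β t.2.2 : ℤ) : ℚ) := by
        push_cast
        rw [hβ t.1, hβ t.2.1, hβ t.2.2]
        nlinarith [hPq t ht, hNQ]
      exact_mod_cast h3
    have hFβ : ∀ j, Fs j → 0 ≤ β j := by
      intro j hj
      have h3 : (0:ℚ) ≤ ((β j : ℤ) : ℚ) := by
        rw [hβ j]
        exact mul_nonneg (hFq j hj) (by positivity)
      exact_mod_cast h3
    have hIβ : ∀ j, Is j → β j < 0 := by
      intro j hj
      have h3 : ((β j : ℤ) : ℚ) < 0 := by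
        rw [hβ j]
        nlinarith [hIq j hj, hNQ]
      exact_mod_cast h3
    -- signs
    set s' : Fin n → ℝ := fun i => if 0 < f i 1 then 1 else -1 with hs'
    have hs1 : ∀ i, s' i = 1 ∨ s' i = -1 := by
      intro i
      by_cases h : 0 < f i 1
      · left; simp [hs', h]
      · right; simp [hs', h]
    have hsne : ∀ i, s' i ≠ 0 := fun i => by rcases hs1 i with h | h <;> rw [h] <;> norm_num
    have hsinv : ∀ i, (s' i)⁻¹ = s' i := fun i => by rcases hs1 i with h | h <;> rw [h] <;> norm_num
    have hspos : ∀ i, ∀ ε ∈ Set.Ioc (0:ℝ) 1, 0 < s' i * f i ε := by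
      intro i ε hε
      by_cases h : 0 < f i 1
      · have h2 : 0 < f i ε := (sign_constant (hfcont i) (hfne i) hε).mpr h
        simp only [hs', if_pos h, one_mul]
        exact h2
      · have h1 : f i 1 < 0 := lt_of_le_of_ne (not_lt.mp h) (hfne i 1 (by norm_num))
        have h2 : ¬ 0 < f i ε := fun hx => h ((sign_constant (hfcont i) (hfne i) hε).mp hx)
        have h3 : f i ε < 0 := lt_of_le_of_ne (not_lt.mp h2) (hfne i ε hε)
        simp only [hs', if_neg h]
        nlinarith
    -- solve the linear system for the logarithms
    set L : (Fin n → ℝ) →ₗ[ℝ] ((Fin n × Fin n × Fin n) → ℝ) :=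
      { toFun := fun x t => chi ℝ (Et t) * (x t.1 + x t.2.1 - x t.2.2),
        map_add' := by intro u v; funext t; simp only [Pi.add_apply]; ring
        map_smul' := by
          intro r u; funext t
          simp only [Pi.smul_apply, smul_eq_mul, RingHom.id_apply]
          ring } with hL
    set bv : (Fin n × Fin n × Fin n) → ℝ :=
      fun t => chi ℝ (Et t) * Real.log |c₀ t.1 t.2.1 t.2.2 / c t.1 t.2.1 t.2.2| with hbv
    have hmem : bv ∈ LinearMap.range L := by
    -- closedness of the range
      have hclosed : IsClosed ((LinearMap.range L : Submodule ℝ _) :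
          Set ((Fin n × Fin n × Fin n) → ℝ)) := Submodule.closed_of_finiteDimensional _
      have htend : Tendsto (fun ε => L (fun l => g l ε)) (𝓝[>] (0:ℝ)) (𝓝 bv) := by
        rw [tendsto_pi_nhds]
        intro t
        by_cases hEs : Et t
        · simp only [hL, LinearMap.coe_mk, AddHom.coe_mk, hbv, chi_of hEs, one_mul]
          exact hEconv t hEs
        · simp only [hL, LinearMap.coe_mk, AddHom.coe_mk, hbv, chi_not hEs, zero_mul]
          exact tendsto_const_nhds
      have hcl := mem_closure_of_tendsto htend
        (Eventually.of_forall fun ε => LinearMap.mem_range_self L _)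
      rwa [hclosed.closure_eq] at hcl
    obtain ⟨x, hx⟩ := hmem
    set γ : Fin n → ℝ := fun i => s' i * Real.exp (x i) with hγ
    have hγne : ∀ i, γ i ≠ 0 := fun i => mul_ne_zero (hsne i) (Real.exp_ne_zero _)
    refine ⟨γ, hγne, β, ?_, ?_, ?_⟩
    · intro i j k
      by_cases hc : c i j k = 0
      · have hc0 : c₀ i j k = 0 := by
          have h1 : Tendsto (fun _ : ℝ => (0:ℝ)) (𝓝[>] (0:ℝ)) (𝓝 (c₀ i j k)) :=
            (hlim i j k).congr (fun ε => by rw [hc]; ring)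
          exact tendsto_nhds_unique h1 tendsto_const_nhds
        rw [hc0]
        simp only [hc, zero_mul]
        exact tendsto_const_nhds
      by_cases hc0 : c₀ i j k = 0
      · have hPm : Pt (i, j, k) := ⟨hc, hc0⟩
        have hm : 0 < β i + β j - β k := hPβ (i, j, k) hPm
        have hmnat : ((β i + β j - β k).toNat : ℤ) = β i + β j - β k :=
          Int.toNat_of_nonneg hm.le
        have h1 : Tendsto (fun ε : ℝ => ε ^ (β i + β j - β k).toNat) (𝓝[>] (0:ℝ)) (𝓝 0) := by
          have h2 := (continuous_pow (β i + β j - β k).toNat).tendsto (0:ℝ)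
          rw [zero_pow (by omega : (β i + β j - β k).toNat ≠ 0)] at h2
          exact h2.mono_left nhdsWithin_le_nhds
        have h4 := h1.const_mul (c i j k * (γ i * γ j / γ k))
        rw [mul_zero] at h4
        rw [hc0]
        refine h4.congr fun ε => ?_
        conv_rhs => rw [← hmnat, zpow_natCast]
      · have hEs : Et (i, j, k) := ⟨hc, hc0⟩
        have hz : β i + β j - β k = 0 := hEβ (i, j, k) hEs
        have hr : c₀ i j k / c i j k ≠ 0 := div_ne_zero hc0 hc
        have hxv : x i + x j - x k = Real.log |c₀ i j k / c i j k| := by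
          have h1 := congrFun hx (i, j, k)
          simp only [hL, LinearMap.coe_mk, AddHom.coe_mk, hbv, chi_of hEs, one_mul] at h1
          exact h1
        set σ : ℝ := s' i * s' j * s' k with hσ
        have hσ1 : σ * σ = 1 := by
          rcases hs1 i with h|h <;> rcases hs1 j with h'|h' <;> rcases hs1 k with h''|h'' <;>
            rw [hσ, h, h', h''] <;> norm_num
        have hσabs : |σ| = 1 := by
          rcases hs1 i with h|h <;> rcases hs1 j with h'|h' <;> rcases hs1 k with h''|h'' <;>
            rw [hσ, h, h', h''] <;> norm_num
        have hσne : σ ≠ 0 := fun h => by simp [h] at hσ1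
        have hpos : ∀ᶠ ε in 𝓝[>] (0:ℝ), 0 < σ * (f i ε * f j ε / f k ε) := by
          filter_upwards [hIoc] with ε hε
          have e1 : σ * (f i ε * f j ε / f k ε)
              = (s' i * f i ε) * (s' j * f j ε) / (s' k * f k ε) := by
            rw [div_eq_mul_inv, div_eq_mul_inv, mul_inv, hsinv k, hσ]; ring
          rw [e1]
          exact div_pos (mul_pos (hspos i ε hε) (hspos j ε hε)) (hspos k ε hε)
        have hσr : 0 ≤ σ * (c₀ i j k / c i j k) :=
          ge_of_tendsto ((hquot i j k hc).const_mul σ) (hpos.mono fun ε h => h.le)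
        have hσrpos : 0 < σ * (c₀ i j k / c i j k) :=
          lt_of_le_of_ne hσr (Ne.symm (mul_ne_zero hσne hr))
        have habs2 : σ * (c₀ i j k / c i j k) = |c₀ i j k / c i j k| := by
          calc σ * (c₀ i j k / c i j k) = |σ * (c₀ i j k / c i j k)| := (abs_of_pos hσrpos).symm
            _ = |σ| * |c₀ i j k / c i j k| := abs_mul _ _
            _ = |c₀ i j k / c i j k| := by rw [hσabs, one_mul]
        have hval : c i j k * (γ i * γ j / γ k) = c₀ i j k := by
          have e2 : γ i * γ j / γ k = σ * Real.exp (x i + x j - x k) := by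
            simp only [hγ]
            rw [Real.exp_sub, Real.exp_add, hσ, div_eq_mul_inv, div_eq_mul_inv, mul_inv,
              hsinv k]
            ring
          rw [e2, hxv, Real.exp_log (abs_pos.mpr hr), ← habs2]
          have e3 : σ * (σ * (c₀ i j k / c i j k)) = c₀ i j k / c i j k := by
            rw [← mul_assoc, hσ1, one_mul]
          rw [e3]
          field_simp
        simp only [hz, zpow_zero, mul_one, hval]
        exact tendsto_const_nhds
    · exact fun j hF => hFβ j hF
    · exact fun j hI => hIβ j hI
  · -- DUAL CASE: derive a contradiction
    exfalso
    set G : ((Fin n × Fin n × Fin n) ⊕ ((Fin n × Fin n × Fin n) ⊕ ((Fin n × Fin n × Fin n) ⊕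
        (Fin n ⊕ Fin n)))) → ℝ → ℝ := fun r ε => ∑ l, ((A r l : ℚ) : ℝ) * g l ε with hG
    have hcastrow : ∀ (s : Fin n × Fin n × Fin n) (l : Fin n), ((rowQ s l : ℚ) : ℝ)
        = (if l = s.1 then (1:ℝ) else 0) + (if l = s.2.1 then 1 else 0)
          - (if l = s.2.2 then 1 else 0) := by
      intro s l
      simp only [hrowQ, heQ]
      push_cast
      rw [apply_ite ((↑·) : ℚ → ℝ), apply_ite ((↑·) : ℚ → ℝ), apply_ite ((↑·) : ℚ → ℝ)]
      norm_num
    have hcaste : ∀ (j l : Fin n), ((eQ j l : ℚ) : ℝ) = (if l = j then (1:ℝ) else 0) := by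
      intro j l
      simp only [heQ]
      rw [apply_ite ((↑·) : ℚ → ℝ)]
      norm_num
    -- row values
    have hGE : ∀ s, Et s → ∀ ε, G (Sum.inl s) ε = g s.1 ε + g s.2.1 ε - g s.2.2 ε := by
      intro s hs ε
      simp only [hG, hA, chi_of hs, one_mul, hcastrow]
      exact dot_eval (fun l => g l ε) s.1 s.2.1 s.2.2
    have hGE' : ∀ s, Et s → ∀ ε, G (Sum.inr (Sum.inl s)) ε
        = -(g s.1 ε + g s.2.1 ε - g s.2.2 ε) := by
      intro s hs ε
      simp only [hG, hA, chi_of hs, one_mul, Rat.cast_neg, neg_mul, Finset.sum_neg_distrib,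
        hcastrow]
      rw [dot_eval (fun l => g l ε) s.1 s.2.1 s.2.2]
    have hGP : ∀ t, Pt t → ∀ ε, G (Sum.inr (Sum.inr (Sum.inl t))) ε
        = g t.1 ε + g t.2.1 ε - g t.2.2 ε := by
      intro t ht ε
      simp only [hG, hA, chi_of ht, one_mul, hcastrow]
      exact dot_eval (fun l => g l ε) t.1 t.2.1 t.2.2
    have hGF : ∀ j, Fs j → ∀ ε, G (Sum.inr (Sum.inr (Sum.inr (Sum.inl j)))) ε = g j ε := by
      intro j hj ε
      simp only [hG, hA, chi_of hj, one_mul, hcaste]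
      exact dot_single (fun l => g l ε) j
    have hGI : ∀ j, Is j → ∀ ε, G (Sum.inr (Sum.inr (Sum.inr (Sum.inr j)))) ε = -(g j ε) := by
      intro j hj ε
      simp only [hG, hA, chi_of hj, one_mul, Rat.cast_neg, neg_mul, Finset.sum_neg_distrib,
        hcaste]
      rw [dot_single (fun l => g l ε) j]
    have hGzero : ∀ r, (∀ l, A r l = 0) → ∀ ε, G r ε = 0 := by
      intro r h ε
      simp only [hG, h, Rat.cast_zero, zero_mul, Finset.sum_const_zero]
    -- the total sum is identically zero
    have h0 : ∀ ε, ∑ r, (y r : ℝ) * G r ε = 0 := by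
      intro ε
      have swap : ∑ r, (y r : ℝ) * G r ε = ∑ l, ((∑ r, y r * A r l : ℚ) : ℝ) * g l ε := by
        simp only [hG, Finset.mul_sum]
        rw [Finset.sum_comm]
        refine Finset.sum_congr rfl fun l _ => ?_
        rw [Rat.cast_sum, Finset.sum_mul]
        refine Finset.sum_congr rfl fun r _ => ?_
        push_cast
        ring
      rw [swap]
      simp only [hyA]
      simp
    -- find the divergent row
    have hex : ∃ r, 0 < y r * b r := by
      by_contra h
      push_neg at h
      exact absurd hyb (not_lt.mpr (Finset.sum_nonpos fun r _ => h r))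
    obtain ⟨r₀, hr₀⟩ := hex
    -- the main row tends to -∞
    have hmain : Tendsto (fun ε => (y r₀ : ℝ) * G r₀ ε) (𝓝[>] (0:ℝ)) atBot := by
      have hypos : (0:ℚ) < y r₀ := by
        rcases lt_or_eq_of_le (hy0 r₀) with h | h
        · exact h
        · rw [← h] at hr₀; simp at hr₀
      have hyposR : (0:ℝ) < (y r₀ : ℝ) := by exact_mod_cast hypos
      rcases r₀ with s | s | t | j | j
      · simp only [hb] at hr₀; simp at hr₀
      · simp only [hb] at hr₀; simp at hr₀
      · have hPtt : Pt t := by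
          by_contra hPn
          simp only [hb, chi_not hPn, mul_zero] at hr₀
          exact lt_irrefl 0 hr₀
        have h1 := (hPdiv t hPtt).congr (fun ε => (hGP t hPtt ε).symm)
        exact h1.const_mul_atBot hyposR
      · simp only [hb] at hr₀; simp at hr₀
      · have hIj : Is j := by
          by_contra hIn
          simp only [hb, chi_not hIn, mul_zero] at hr₀
          exact lt_irrefl 0 hr₀
        have h1 : Tendsto (fun ε => -(g j ε)) (𝓝[>] (0:ℝ)) atBot :=
          tendsto_neg_atTop_atBot.comp (hIdivg j hIj)
        have h2 := h1.congr (fun ε => (hGI j hIj ε).symm)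
        exact h2.const_mul_atBot hyposR
    -- all rows are eventually bounded above
    have hbd : ∀ r, ∃ C, ∀ᶠ ε in 𝓝[>] (0:ℝ), (y r : ℝ) * G r ε ≤ C := by
      intro r
      have hyr : (0:ℝ) ≤ (y r : ℝ) := by exact_mod_cast hy0 r
      rcases r with s | s | t | j | j
      · by_cases hs : Et s
        · refine ⟨(y (Sum.inl s) : ℝ) * (Real.log |c₀ s.1 s.2.1 s.2.2 / c s.1 s.2.1 s.2.2| + 1), ?_⟩
          have h1 := (hEconv s hs).eventually (eventually_le_nhds (lt_add_one _))
          filter_upwards [h1] with ε hε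
          rw [hGE s hs ε]
          exact mul_le_mul_of_nonneg_left hε hyr
        · refine ⟨0, Eventually.of_forall fun ε => ?_⟩
          rw [hGzero (Sum.inl s) (fun l => by simp only [hA, chi_not hs, zero_mul]) ε, mul_zero]
      · by_cases hs : Et s
        · refine ⟨(y (Sum.inr (Sum.inl s)) : ℝ) *
            (-(Real.log |c₀ s.1 s.2.1 s.2.2 / c s.1 s.2.1 s.2.2|) + 1), ?_⟩
          have h1 := ((hEconv s hs).neg).eventually (eventually_le_nhds (lt_add_one _))
          filter_upwards [h1] with ε hε
          rw [hGE' s hs ε]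
          exact mul_le_mul_of_nonneg_left hε hyr
        · refine ⟨0, Eventually.of_forall fun ε => ?_⟩
          rw [hGzero (Sum.inr (Sum.inl s)) (fun l => by simp only [hA, chi_not hs, zero_mul]) ε, mul_zero]
      · by_cases ht : Pt t
        · refine ⟨0, ?_⟩
          have h1 := (hPdiv t ht).eventually (eventually_le_atBot 0)
          filter_upwards [h1] with ε hε
          rw [hGP t ht ε]
          exact mul_nonpos_of_nonneg_of_nonpos hyr hε
        · refine ⟨0, Eventually.of_forall fun ε => ?_⟩
          rw [hGzero (Sum.inr (Sum.inr (Sum.inl t))) (fun l => by simp only [hA, chi_not ht, zero_mul]) ε, mul_zero]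
      · by_cases hj : Fs j
        · obtain ⟨C, hC⟩ := hFbd j hj
          refine ⟨(y (Sum.inr (Sum.inr (Sum.inr (Sum.inl j)))) : ℝ) * C, ?_⟩
          filter_upwards [hC] with ε hε
          rw [hGF j hj ε]
          exact mul_le_mul_of_nonneg_left hε hyr
        · refine ⟨0, Eventually.of_forall fun ε => ?_⟩
          rw [hGzero (Sum.inr (Sum.inr (Sum.inr (Sum.inl j)))) (fun l => by simp only [hA, chi_not hj, zero_mul]) ε, mul_zero]
      · by_cases hj : Is j
        · refine ⟨0, ?_⟩
          have h1 := (hIdivg j hj).eventually (eventually_ge_atTop (0:ℝ))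
          filter_upwards [h1] with ε hε
          rw [hGI j hj ε]
          exact mul_nonpos_of_nonneg_of_nonpos hyr (by linarith)
        · refine ⟨0, Eventually.of_forall fun ε => ?_⟩
          rw [hGzero (Sum.inr (Sum.inr (Sum.inr (Sum.inr j)))) (fun l => by simp only [hA, chi_not hj, zero_mul]) ε, mul_zero]
    -- combine everything
    choose C hC using hbd
    have hrest : ∀ᶠ ε in 𝓝[>] (0:ℝ),
        ∑ r ∈ Finset.univ.erase r₀, (y r : ℝ) * G r ε ≤ ∑ r ∈ Finset.univ.erase r₀, C r := by
      have hall : ∀ᶠ ε in 𝓝[>] (0:ℝ), ∀ r ∈ Finset.univ.erase r₀, (y r : ℝ) * G r ε ≤ C r :=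
        (eventually_all_finset _).mpr (fun r _ => hC r)
      filter_upwards [hall] with ε h
      exact Finset.sum_le_sum h
    have hΦ : Tendsto (fun ε => ∑ r, (y r : ℝ) * G r ε) (𝓝[>] (0:ℝ)) atBot := by
      apply tendsto_atBot_mono' _ ?_
        (tendsto_atBot_add_const_right _ (∑ r ∈ Finset.univ.erase r₀, C r) hmain)
      filter_upwards [hrest] with ε h
      rw [← Finset.add_sum_erase _ _ (Finset.mem_univ r₀)]
      linarith
    have hfin := (hΦ.eventually (eventually_le_atBot (-1:ℝ))).exists
    obtain ⟨ε, hε⟩ := hfin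
    rw [h0 ε] at hε
    linarith
end
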